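/- arXiv:1002.2271 — 8 statements merged into one kernel-verified Lean document; each statement's English description precedes it below -/
import Mathlib

section
/- For all p, v > 0 and all k ≥ 0, the convolution of the product g_p · H_k^{[p]} with the Gaussian density g_v satisfies (g_p H_k^{[p]}) ⋆ g_v = (p/(p+v))^{k/2} · g_{p+v} · H_k^{[p+v]}. -/
open MeasureTheory Real

/-- Probabilists' Hermite polynomial `H_k(x) = (-1)^k e^{x²/2} (d^k/dx^k) e^{-x²/2}`. -/
noncomputable def hermiteH (k : ℕ) (x : ℝ) : ℝ :=
  (-1 : ℝ) ^ k * Real.exp (x ^ 2 / 2) *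
    iteratedDeriv k (fun y : ℝ => Real.exp (-(y ^ 2) / 2)) x

/-- Centered Gaussian density of variance `p`. -/
noncomputable def gauss (p : ℝ) (x : ℝ) : ℝ :=
  (Real.sqrt (2 * Real.pi * p))⁻¹ * Real.exp (-(x ^ 2) / (2 * p))

/-- Normalized Hermite polynomial adapted to variance `p`:
`H_k^{[p]}(x) = H_k(x/√p)/√(k!)`. -/
noncomputable def hermiteN (p : ℝ) (k : ℕ) (x : ℝ) : ℝ :=
  (Real.sqrt (Nat.factorial k))⁻¹ * hermiteH k (x / Real.sqrt p)

open Filter Topology Polynomial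

/-! ### Auxiliary lemmas -/

private lemma iteratedDeriv_cmul (n : ℕ) (c : ℝ) (f : ℝ → ℝ) :
    iteratedDeriv n (fun x => c * f x) = fun x => c * iteratedDeriv n f x := by
  induction n with
  | zero => simp
  | succ n ih =>
    funext x
    rw [iteratedDeriv_succ, ih, iteratedDeriv_succ, deriv_const_mul_field]

private lemma hermiteH_eq_aeval (k : ℕ) (x : ℝ) :
    hermiteH k x = aeval x (Polynomial.hermite k) := by
  have h1 : (fun y : ℝ => Real.exp (-(y ^ 2) / 2)) = fun y : ℝ => Real.exp (-(y ^ 2 / 2)) := by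
    funext y; rw [neg_div]
  rw [hermiteH, h1, iteratedDeriv_eq_iterate,
    Polynomial.deriv_gaussian_eq_hermite_mul_gaussian]
  have h2 : Real.exp (x ^ 2 / 2) * Real.exp (-(x ^ 2 / 2)) = 1 := by
    rw [← Real.exp_add]; simp
  have h3 : ((-1 : ℝ) ^ k) * ((-1 : ℝ) ^ k) = 1 := by
    rw [← mul_pow]; norm_num
  calc (-1 : ℝ) ^ k * Real.exp (x ^ 2 / 2) *
        ((-1) ^ k * aeval x (Polynomial.hermite k) * Real.exp (-(x ^ 2 / 2)))
      = ((-1 : ℝ) ^ k * (-1) ^ k) * (Real.exp (x ^ 2 / 2) * Real.exp (-(x ^ 2 / 2))) *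
        aeval x (Polynomial.hermite k) := by ring
    _ = aeval x (Polynomial.hermite k) := by rw [h2, h3]; ring

private lemma iteratedDeriv_G (k : ℕ) (x : ℝ) :
    iteratedDeriv k (fun y : ℝ => Real.exp (-(y ^ 2) / 2)) x =
      (-1 : ℝ) ^ k * hermiteH k x * Real.exp (-(x ^ 2) / 2) := by
  set D := iteratedDeriv k (fun y : ℝ => Real.exp (-(y ^ 2) / 2)) x with hD
  rw [hermiteH, ← hD]
  symm
  have h2 : Real.exp (x ^ 2 / 2) * Real.exp (-(x ^ 2) / 2) = 1 := by
    rw [← Real.exp_add]; simp [neg_div]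
  have h3 : ((-1 : ℝ) ^ k) * ((-1 : ℝ) ^ k) = 1 := by
    rw [← mul_pow]; norm_num
  calc (-1 : ℝ) ^ k * ((-1 : ℝ) ^ k * Real.exp (x ^ 2 / 2) * D) * Real.exp (-(x ^ 2) / 2)
      = ((-1 : ℝ) ^ k * (-1) ^ k) * (Real.exp (x ^ 2 / 2) * Real.exp (-(x ^ 2) / 2)) * D := by
        ring
    _ = D := by rw [h2, h3]; ring

private lemma contDiff_G : ContDiff ℝ ⊤ (fun y : ℝ => Real.exp (-(y ^ 2) / 2)) := by
  apply ContDiff.exp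
  exact (contDiff_id.pow 2).neg.div_const 2

private lemma contDiff_gauss (p : ℝ) : ContDiff ℝ ⊤ (gauss p) := by
  unfold gauss
  exact contDiff_const.mul (((contDiff_id.pow 2).neg.div_const (2 * p)).exp)

private lemma gauss_eq_comp (p : ℝ) (hp : 0 < p) :
    gauss p = fun x : ℝ =>
      (Real.sqrt (2 * Real.pi * p))⁻¹ *
        (fun y : ℝ => Real.exp (-(y ^ 2) / 2)) ((Real.sqrt p)⁻¹ * x) := by
  funext x
  have hsp : (Real.sqrt p) ^ 2 = p := Real.sq_sqrt hp.le
  simp only [gauss]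
  have h2 : -(((Real.sqrt p)⁻¹ * x) ^ 2) / 2 = -(x ^ 2) / (2 * p) := by
    rw [mul_pow, inv_pow, hsp]
    ring
  rw [h2]

/-- L1: the iterated derivative of a Gaussian density. -/
private lemma iteratedDeriv_gauss (p : ℝ) (hp : 0 < p) (k : ℕ) (x : ℝ) :
    iteratedDeriv k (gauss p) x =
      (-(Real.sqrt p)⁻¹) ^ k * (gauss p x * hermiteH k (x / Real.sqrt p)) := by
  have hsp0 : (0 : ℝ) < Real.sqrt p := Real.sqrt_pos.2 hp
  rw [gauss_eq_comp p hp, iteratedDeriv_cmul]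
  simp only [iteratedDeriv_comp_const_mul (contDiff_G.of_le le_top), iteratedDeriv_G]
  have hx : x / Real.sqrt p = (Real.sqrt p)⁻¹ * x := by rw [div_eq_inv_mul]
  rw [hx, neg_pow]
  ring

/-- any polynomial times `exp (-(x^2)/4)` tends to `0` at `atTop`. -/
private lemma poly_mul_exp_tendsto_atTop (P : ℝ[X]) :
    Tendsto (fun x : ℝ => P.eval x * Real.exp (-(x ^ 2) / 4)) atTop (𝓝 0) := by
  apply squeeze_zero_norm' (a := fun x : ℝ => |P.eval x / Real.exp x|)
  · filter_upwards [eventually_ge_atTop (4 : ℝ)] with x hx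
    have h1 : Real.exp (-(x ^ 2) / 4) ≤ Real.exp (-x) := by
      apply Real.exp_le_exp.2
      nlinarith
    have h2 : |P.eval x * Real.exp (-(x ^ 2) / 4)| = |P.eval x| * Real.exp (-(x ^ 2) / 4) := by
      rw [abs_mul, abs_of_pos (Real.exp_pos _)]
    rw [Real.norm_eq_abs, h2, abs_div, abs_of_pos (Real.exp_pos x),
      div_eq_mul_inv (|P.eval x|), ← Real.exp_neg]
    exact mul_le_mul_of_nonneg_left h1 (abs_nonneg _)
  · have := (P.tendsto_div_exp_atTop).abs
    simpa using this

private lemma poly_mul_exp_bounded (P : ℝ[X]) :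
    ∃ M : ℝ, 0 ≤ M ∧ ∀ x : ℝ, |P.eval x| * Real.exp (-(x ^ 2) / 4) ≤ M := by
  set f : ℝ → ℝ := fun x => P.eval x * Real.exp (-(x ^ 2) / 4) with hf
  have hcont : Continuous f := by
    apply Continuous.mul
    · exact P.continuous
    · exact Real.continuous_exp.comp ((continuous_pow 2).neg.div_const 4)
  have htop : Tendsto f atTop (𝓝 0) := poly_mul_exp_tendsto_atTop P
  have hbot : Tendsto f atBot (𝓝 0) := by
    have h1 := poly_mul_exp_tendsto_atTop (P.comp (-X))
    have h2 := h1.comp tendsto_neg_atBot_atTop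
    have h3 : (fun x : ℝ => (P.comp (-X)).eval (-x) * Real.exp (-((-x) ^ 2) / 4)) = f := by
      funext x; simp [f, Polynomial.eval_comp]
    simpa [Function.comp_def, h3] using h2
  have hzero : Tendsto f (cocompact ℝ) (𝓝 0) := by
    rw [cocompact_eq_atBot_atTop, tendsto_sup]
    exact ⟨hbot, htop⟩
  let F : ZeroAtInftyContinuousMap ℝ ℝ := ⟨⟨f, hcont⟩, hzero⟩
  refine ⟨‖F.toBCF‖, norm_nonneg _, fun x => ?_⟩
  have := F.toBCF.norm_coe_le_norm x
  have hx : |f x| = |P.eval x| * Real.exp (-(x ^ 2) / 4) := by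
    rw [hf, abs_mul, abs_of_pos (Real.exp_pos _)]
  rw [← hx]
  rw [Real.norm_eq_abs] at this
  exact this

/-- B: Gaussian-type bound on the iterated derivatives of `gauss p`. -/
private lemma iteratedDeriv_gauss_bound (p : ℝ) (hp : 0 < p) (k : ℕ) :
    ∃ C : ℝ, 0 ≤ C ∧ ∀ u : ℝ,
      |iteratedDeriv k (gauss p) u| ≤ C * Real.exp (-(u ^ 2) / (4 * p)) := by
  obtain ⟨M, hM0, hM⟩ := poly_mul_exp_bounded ((Polynomial.hermite k).map (algebraMap ℤ ℝ))
  have hsp0 : (0 : ℝ) < Real.sqrt p := Real.sqrt_pos.2 hp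
  have hsp : (Real.sqrt p) ^ 2 = p := Real.sq_sqrt hp.le
  refine ⟨((Real.sqrt p)⁻¹) ^ k * (Real.sqrt (2 * Real.pi * p))⁻¹ * M, by positivity, fun u => ?_⟩
  have hy : (u / Real.sqrt p) ^ 2 = u ^ 2 / p := by
    rw [div_pow, hsp]
  have hsplit : Real.exp (-(u ^ 2) / (2 * p)) =
      Real.exp (-((u / Real.sqrt p) ^ 2) / 4) * Real.exp (-(u ^ 2) / (4 * p)) := by
    rw [← Real.exp_add, hy]
    congr 1
    field_simp
    ring
  rw [iteratedDeriv_gauss p hp k u]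
  have habs : |(-(Real.sqrt p)⁻¹) ^ k * (gauss p u * hermiteH k (u / Real.sqrt p))| =
      ((Real.sqrt p)⁻¹) ^ k * (gauss p u * |hermiteH k (u / Real.sqrt p)|) := by
    rw [abs_mul, abs_pow, abs_neg, abs_inv, abs_of_pos hsp0, abs_mul]
    congr 2
    · exact abs_of_nonneg (by unfold gauss; positivity)
  rw [habs]
  unfold gauss
  rw [hsplit]
  have hHb : |hermiteH k (u / Real.sqrt p)| * Real.exp (-((u / Real.sqrt p) ^ 2) / 4) ≤ M := by
    rw [hermiteH_eq_aeval, Polynomial.aeval_def, ← Polynomial.eval_map]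
    exact hM (u / Real.sqrt p)
  calc ((Real.sqrt p)⁻¹) ^ k * ((Real.sqrt (2 * Real.pi * p))⁻¹ *
          (Real.exp (-((u / Real.sqrt p) ^ 2) / 4) * Real.exp (-(u ^ 2) / (4 * p))) *
          |hermiteH k (u / Real.sqrt p)|)
      = (((Real.sqrt p)⁻¹) ^ k * (Real.sqrt (2 * Real.pi * p))⁻¹) *
          (|hermiteH k (u / Real.sqrt p)| * Real.exp (-((u / Real.sqrt p) ^ 2) / 4)) *
          Real.exp (-(u ^ 2) / (4 * p)) := by ring
    _ ≤ (((Real.sqrt p)⁻¹) ^ k * (Real.sqrt (2 * Real.pi * p))⁻¹) * M *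
          Real.exp (-(u ^ 2) / (4 * p)) := by
        apply mul_le_mul_of_nonneg_right _ (Real.exp_pos _).le
        apply mul_le_mul_of_nonneg_left hHb (by positivity)

private lemma integral_gauss_eq_one (w : ℝ) (hw : 0 < w) : ∫ s : ℝ, gauss w s = 1 := by
  unfold gauss
  rw [MeasureTheory.integral_const_mul]
  have h1 : (fun s : ℝ => Real.exp (-(s ^ 2) / (2 * w))) =
      fun s : ℝ => Real.exp (-(2 * w)⁻¹ * s ^ 2) := by
    funext s
    congr 1
    field_simp
  rw [h1, integral_gaussian]
  rw [show Real.pi / (2 * w)⁻¹ = 2 * Real.pi * w by field_simp]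
  exact inv_mul_cancel₀ (ne_of_gt (Real.sqrt_pos.2 (by positivity)))

/-- base case: convolution of two Gaussian densities. -/
private lemma gauss_conv_gauss (p v : ℝ) (hp : 0 < p) (hv : 0 < v) (x : ℝ) :
    ∫ s : ℝ, gauss p (x - s) * gauss v s = gauss (p + v) x := by
  have hpv : (0 : ℝ) < p + v := by linarith
  set w : ℝ := p * v / (p + v) with hwdef
  set m : ℝ := v * x / (p + v) with hmdef
  have hw : 0 < w := by positivity
  have hpoint : ∀ s : ℝ, gauss p (x - s) * gauss v s = gauss (p + v) x * gauss w (s - m) := by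
    intro s
    unfold gauss
    have hconst : (Real.sqrt (2 * Real.pi * p))⁻¹ * (Real.sqrt (2 * Real.pi * v))⁻¹ =
        (Real.sqrt (2 * Real.pi * (p + v)))⁻¹ * (Real.sqrt (2 * Real.pi * w))⁻¹ := by
      rw [← mul_inv, ← mul_inv, ← Real.sqrt_mul (by positivity), ← Real.sqrt_mul (by positivity)]
      congr 2
      rw [hwdef]
      field_simp
    have hexp : Real.exp (-((x - s) ^ 2) / (2 * p)) * Real.exp (-(s ^ 2) / (2 * v)) =
        Real.exp (-(x ^ 2) / (2 * (p + v))) * Real.exp (-((s - m) ^ 2) / (2 * w)) := by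
      rw [← Real.exp_add, ← Real.exp_add]
      congr 1
      rw [hwdef, hmdef]
      field_simp
      ring
    calc (Real.sqrt (2 * Real.pi * p))⁻¹ * Real.exp (-((x - s) ^ 2) / (2 * p)) *
            ((Real.sqrt (2 * Real.pi * v))⁻¹ * Real.exp (-(s ^ 2) / (2 * v)))
        = ((Real.sqrt (2 * Real.pi * p))⁻¹ * (Real.sqrt (2 * Real.pi * v))⁻¹) *
            (Real.exp (-((x - s) ^ 2) / (2 * p)) * Real.exp (-(s ^ 2) / (2 * v))) := by ring
      _ = ((Real.sqrt (2 * Real.pi * (p + v)))⁻¹ * (Real.sqrt (2 * Real.pi * w))⁻¹) *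
            (Real.exp (-(x ^ 2) / (2 * (p + v))) * Real.exp (-((s - m) ^ 2) / (2 * w))) := by
          rw [hconst, hexp]
      _ = (Real.sqrt (2 * Real.pi * (p + v)))⁻¹ * Real.exp (-(x ^ 2) / (2 * (p + v))) *
            ((Real.sqrt (2 * Real.pi * w))⁻¹ * Real.exp (-((s - m) ^ 2) / (2 * w))) := by ring
  calc ∫ s : ℝ, gauss p (x - s) * gauss v s
      = ∫ s : ℝ, gauss (p + v) x * gauss w (s - m) := by
        congr 1; funext s; exact hpoint s
    _ = gauss (p + v) x * ∫ s : ℝ, gauss w (s - m) := by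
        rw [MeasureTheory.integral_const_mul]
    _ = gauss (p + v) x := by
        rw [MeasureTheory.integral_sub_right_eq_self (gauss w) m, integral_gauss_eq_one w hw]
        rw [mul_one]

private lemma integrable_exp_quarter (p : ℝ) (hp : 0 < p) (a : ℝ) (c : ℝ) (hc : 0 < c) :
    Integrable (fun s : ℝ => Real.exp (-((a - s) ^ 2) / (c * p))) := by
  have h1 : Integrable (fun s : ℝ => Real.exp (-(c * p)⁻¹ * s ^ 2)) :=
    integrable_exp_neg_mul_sq (by positivity)
  have h2 : Integrable (fun s : ℝ => Real.exp (-(c * p)⁻¹ * (s - a) ^ 2)) :=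
    h1.comp_sub_right a
  apply h2.congr
  filter_upwards with s
  congr 1
  rw [show a - s = -(s - a) by ring, neg_sq]
  field_simp

private lemma gauss_nonneg (v : ℝ) (s : ℝ) : 0 ≤ gauss v s := by
  unfold gauss; positivity

private lemma gauss_le_bound (v : ℝ) (hv : 0 < v) (s : ℝ) :
    gauss v s ≤ (Real.sqrt (2 * Real.pi * v))⁻¹ := by
  unfold gauss
  have h1 : Real.exp (-(s ^ 2) / (2 * v)) ≤ 1 := by
    rw [← Real.exp_zero]
    apply Real.exp_le_exp.2
    have h2 : 0 ≤ s ^ 2 / (2 * v) := by positivity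
    rw [neg_div]
    linarith
  calc (Real.sqrt (2 * Real.pi * v))⁻¹ * Real.exp (-(s ^ 2) / (2 * v))
      ≤ (Real.sqrt (2 * Real.pi * v))⁻¹ * 1 :=
        mul_le_mul_of_nonneg_left h1 (by positivity)
    _ = _ := mul_one _

/-- L2: convolution of the k-th derivative of `gauss p` with `gauss v`. -/
private lemma conv_iteratedDeriv (p v : ℝ) (hp : 0 < p) (hv : 0 < v) :
    ∀ (k : ℕ) (x : ℝ),
      (∫ s : ℝ, iteratedDeriv k (gauss p) (x - s) * gauss v s) =
        iteratedDeriv k (gauss (p + v)) x := by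
  intro k
  induction k with
  | zero =>
    intro x
    simpa only [iteratedDeriv_zero] using gauss_conv_gauss p v hp hv x
  | succ k ih =>
    intro x
    obtain ⟨C, hC0, hC⟩ := iteratedDeriv_gauss_bound p hp (k + 1)
    obtain ⟨C', hC'0, hC'⟩ := iteratedDeriv_gauss_bound p hp k
    set f := iteratedDeriv k (gauss p) with hfdef
    set f' := iteratedDeriv (k + 1) (gauss p) with hf'def
    have hcontf : Continuous f := (contDiff_gauss p).continuous_iteratedDeriv k le_top
    have hcontf' : Continuous f' := (contDiff_gauss p).continuous_iteratedDeriv (k + 1) le_top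
    have hcontgv : Continuous (gauss v) := by
      unfold gauss
      exact continuous_const.mul (Real.continuous_exp.comp
        ((continuous_pow 2).neg.div_const (2 * v)))
    have hderivf : ∀ u : ℝ, HasDerivAt f (f' u) u := by
      intro u
      have hdiff : Differentiable ℝ f :=
        (contDiff_gauss p).differentiable_iteratedDeriv k (by
          exact_mod_cast WithTop.coe_lt_top (k : ℕ∞))
      have := (hdiff u).hasDerivAt
      rwa [show deriv f u = f' u by rw [hf'def, iteratedDeriv_succ]] at this
    -- dominated-derivative argument
    have key := hasDerivAt_integral_of_dominated_loc_of_deriv_le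
      (μ := volume) (x₀ := x)
      (F := fun y s => f (y - s) * gauss v s)
      (F' := fun y s => f' (y - s) * gauss v s)
      (bound := fun s => C * Real.exp (1 / (4 * p)) * (Real.sqrt (2 * Real.pi * v))⁻¹ *
        Real.exp (-((x - s) ^ 2) / (8 * p)))
      (s := Metric.ball x 1) (Metric.ball_mem_nhds x one_pos)
      ?_ ?_ ?_ ?_ ?_ ?_
    · have hd := key.2
      calc (∫ s : ℝ, f' (x - s) * gauss v s)
          = deriv (fun y => ∫ s : ℝ, f (y - s) * gauss v s) x := hd.deriv.symm
        _ = deriv (iteratedDeriv k (gauss (p + v))) x := by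
            congr 1
            funext y
            exact ih y
        _ = iteratedDeriv (k + 1) (gauss (p + v)) x := by rw [iteratedDeriv_succ]
    · filter_upwards with y
      exact ((hcontf.comp (continuous_const.sub continuous_id)).mul hcontgv).aestronglyMeasurable
    · -- integrability of F x
      apply Integrable.mono'
        ((integrable_exp_quarter p hp x 4 (by norm_num)).const_mul
          (C' * (Real.sqrt (2 * Real.pi * v))⁻¹))
      · exact ((hcontf.comp (continuous_const.sub continuous_id)).mul
          hcontgv).aestronglyMeasurable
      · filter_upwards with s
        rw [Real.norm_eq_abs, abs_mul, abs_of_nonneg (gauss_nonneg v s)]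
        calc |f (x - s)| * gauss v s
            ≤ (C' * Real.exp (-((x - s) ^ 2) / (4 * p))) * (Real.sqrt (2 * Real.pi * v))⁻¹ :=
              mul_le_mul (hC' (x - s)) (gauss_le_bound v hv s) (gauss_nonneg v s)
                (by positivity)
          _ = C' * (Real.sqrt (2 * Real.pi * v))⁻¹ * Real.exp (-((x - s) ^ 2) / (4 * p)) := by
              ring
    · exact ((hcontf'.comp (continuous_const.sub continuous_id)).mul hcontgv).aestronglyMeasurable
    · -- bound
      filter_upwards with s
      intro y hy
      have hyx : |y - x| < 1 := by
        rw [Metric.mem_ball, Real.dist_eq] at hy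
        exact hy
      have hsq : (x - s) ^ 2 ≤ 2 * (y - s) ^ 2 + 2 := by
        have h1 : (x - s) ^ 2 ≤ 2 * (y - s) ^ 2 + 2 * (x - y) ^ 2 := by
          nlinarith [sq_nonneg ((x - y) - (y - s))]
        have h2 : (x - y) ^ 2 ≤ 1 := by
          have := abs_nonneg (y - x)
          nlinarith [sq_abs (y - x), hyx]
        linarith
      have hexple : Real.exp (-((y - s) ^ 2) / (4 * p)) ≤
          Real.exp (1 / (4 * p)) * Real.exp (-((x - s) ^ 2) / (8 * p)) := by
        rw [← Real.exp_add]
        apply Real.exp_le_exp.2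
        have h8p : (0 : ℝ) < 8 * p := by positivity
        have heq : 1 / (4 * p) + -((x - s) ^ 2) / (8 * p) - (-((y - s) ^ 2) / (4 * p)) =
            (2 * (y - s) ^ 2 + 2 - (x - s) ^ 2) / (8 * p) := by
          field_simp
          ring
        have hnn : (0 : ℝ) ≤ (2 * (y - s) ^ 2 + 2 - (x - s) ^ 2) / (8 * p) :=
          div_nonneg (by linarith [hsq]) h8p.le
        linarith [heq, hnn]
      rw [Real.norm_eq_abs, abs_mul, abs_of_nonneg (gauss_nonneg v s)]
      calc |f' (y - s)| * gauss v s
          ≤ (C * Real.exp (-((y - s) ^ 2) / (4 * p))) * (Real.sqrt (2 * Real.pi * v))⁻¹ :=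
            mul_le_mul (hC (y - s)) (gauss_le_bound v hv s) (gauss_nonneg v s) (by positivity)
        _ ≤ (C * (Real.exp (1 / (4 * p)) * Real.exp (-((x - s) ^ 2) / (8 * p)))) *
              (Real.sqrt (2 * Real.pi * v))⁻¹ := by
            apply mul_le_mul_of_nonneg_right _ (by positivity)
            exact mul_le_mul_of_nonneg_left hexple hC0
        _ = C * Real.exp (1 / (4 * p)) * (Real.sqrt (2 * Real.pi * v))⁻¹ *
              Real.exp (-((x - s) ^ 2) / (8 * p)) := by ring
    · exact (integrable_exp_quarter p hp x 8 (by norm_num)).const_mul _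
    · -- differentiability
      filter_upwards with s
      intro y hy
      have h1 : HasDerivAt (fun y : ℝ => y - s) 1 y := (hasDerivAt_id y).sub_const s
      have h2 : HasDerivAt f (f' (y - s)) (y - s) := hderivf (y - s)
      have h3 := (h2.comp y h1).mul_const (gauss v s)
      simpa [Function.comp_def] using h3

/-- `(g_p H_k^{[p]}) ⋆ g_v = (p/(p+v))^{k/2} g_{p+v} H_k^{[p+v]}`. -/
theorem gauss_hermite_conv (p v : ℝ) (hp : 0 < p) (hv : 0 < v) (k : ℕ) (x : ℝ) :
    ∫ t, gauss p t * hermiteN p k t * gauss v (x - t) =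
      (p / (p + v)) ^ ((k : ℝ) / 2) * (gauss (p + v) x * hermiteN (p + v) k x) := by
  have hpv : (0 : ℝ) < p + v := by linarith
  have hsp0 : (0 : ℝ) < Real.sqrt p := Real.sqrt_pos.2 hp
  have hspv0 : (0 : ℝ) < Real.sqrt (p + v) := Real.sqrt_pos.2 hpv
  -- rewrite the integrand via the iterated derivative
  have hfactor : ∀ t : ℝ, gauss p t * hermiteH k (t / Real.sqrt p) =
      (-Real.sqrt p) ^ k * iteratedDeriv k (gauss p) t := by
    intro t
    rw [iteratedDeriv_gauss p hp k t, ← mul_assoc, ← mul_pow,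
      show (-Real.sqrt p) * (-(Real.sqrt p)⁻¹) = 1 by
        rw [neg_mul_neg]; exact mul_inv_cancel₀ (ne_of_gt hsp0),
      one_pow, one_mul]
  have hintegrand : ∀ t : ℝ, gauss p t * hermiteN p k t * gauss v (x - t) =
      ((Real.sqrt (Nat.factorial k))⁻¹ * (-Real.sqrt p) ^ k) *
        (iteratedDeriv k (gauss p) t * gauss v (x - t)) := by
    intro t
    rw [hermiteN]
    have := hfactor t
    calc gauss p t * ((Real.sqrt (Nat.factorial k))⁻¹ * hermiteH k (t / Real.sqrt p)) *
            gauss v (x - t)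
        = (Real.sqrt (Nat.factorial k))⁻¹ * (gauss p t * hermiteH k (t / Real.sqrt p)) *
            gauss v (x - t) := by ring
      _ = (Real.sqrt (Nat.factorial k))⁻¹ * ((-Real.sqrt p) ^ k * iteratedDeriv k (gauss p) t) *
            gauss v (x - t) := by rw [this]
      _ = ((Real.sqrt (Nat.factorial k))⁻¹ * (-Real.sqrt p) ^ k) *
            (iteratedDeriv k (gauss p) t * gauss v (x - t)) := by ring
  have hstep1 : (∫ t, gauss p t * hermiteN p k t * gauss v (x - t)) =
      ((Real.sqrt (Nat.factorial k))⁻¹ * (-Real.sqrt p) ^ k) *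
        ∫ t, iteratedDeriv k (gauss p) t * gauss v (x - t) := by
    rw [← MeasureTheory.integral_const_mul]
    congr 1
    funext t
    exact hintegrand t
  -- change of variables t ↦ x - s
  have hstep2 : (∫ t, iteratedDeriv k (gauss p) t * gauss v (x - t)) =
      ∫ s, iteratedDeriv k (gauss p) (x - s) * gauss v s := by
    have := MeasureTheory.integral_sub_left_eq_self
      (fun t => iteratedDeriv k (gauss p) t * gauss v (x - t)) (volume : Measure ℝ) x
    rw [← this]
    congr 1
    funext s
    simp
  rw [hstep1, hstep2, conv_iteratedDeriv p v hp hv k x, iteratedDeriv_gauss (p + v) hpv k x]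
  -- final constant computation
  have hpow : (p / (p + v)) ^ ((k : ℝ) / 2) = (Real.sqrt p / Real.sqrt (p + v)) ^ k := by
    have h1 : p / (p + v) = (Real.sqrt p / Real.sqrt (p + v)) ^ 2 := by
      rw [div_pow, Real.sq_sqrt hp.le, Real.sq_sqrt hpv.le]
    rw [h1, ← Real.rpow_natCast (Real.sqrt p / Real.sqrt (p + v)) 2,
      ← Real.rpow_mul (by positivity),
      show ((2 : ℕ) : ℝ) * ((k : ℝ) / 2) = (k : ℝ) by push_cast; ring,
      Real.rpow_natCast]
  have hcomb : (-Real.sqrt p) ^ k * (-(Real.sqrt (p + v))⁻¹) ^ k =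
      (Real.sqrt p / Real.sqrt (p + v)) ^ k := by
    rw [← mul_pow]
    congr 1
    rw [neg_mul_neg, div_eq_mul_inv]
  rw [hpow, hermiteN]
  calc (Real.sqrt (Nat.factorial k))⁻¹ * (-Real.sqrt p) ^ k *
          ((-(Real.sqrt (p + v))⁻¹) ^ k * (gauss (p + v) x * hermiteH k (x / Real.sqrt (p + v))))
      = ((-Real.sqrt p) ^ k * (-(Real.sqrt (p + v))⁻¹) ^ k) *
          ((Real.sqrt (Nat.factorial k))⁻¹ * (gauss (p + v) x *
            hermiteH k (x / Real.sqrt (p + v)))) := by ring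
    _ = (Real.sqrt p / Real.sqrt (p + v)) ^ k *
          (gauss (p + v) x * ((Real.sqrt (Nat.factorial k))⁻¹ *
            hermiteH k (x / Real.sqrt (p + v)))) := by rw [hcomb]; ring
end

section
/- For a, b > 0, the product-convolution of first Hermite functions satisfies (g_a H_1^{[a]}) ⋆ (g_b H_1^{[b]}) = (√(2ab)/(a+b)) · g_{a+b} · H_2^{[a+b]}. -/
open MeasureTheory Real

lemma gderiv : deriv (fun y : ℝ => Real.exp (-(y ^ 2) / 2)) = fun y : ℝ => -y * Real.exp (-(y^2)/2) := by
  funext z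
  have h : HasDerivAt (fun y : ℝ => Real.exp (-(y ^ 2) / 2)) (-z * Real.exp (-(z^2)/2)) z := by
    have := (((hasDerivAt_pow 2 z).neg.div_const 2).exp)
    simp only [Pi.neg_apply] at this
    convert this using 1
    ring
  exact h.deriv

lemma hH1 (y : ℝ) : hermiteH 1 y = y := by
  unfold hermiteH
  rw [iteratedDeriv_one, gderiv]
  show (-1:ℝ)^1 * Real.exp (y^2/2) * (-y * Real.exp (-(y^2)/2)) = y
  rw [show (-1:ℝ)^1 * Real.exp (y^2/2) * (-y * Real.exp (-(y^2)/2)) =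
      y * Real.exp (y^2/2 + -(y^2)/2) by rw [Real.exp_add]; ring,
    show y^2/2 + -(y^2)/2 = (0:ℝ) by ring, Real.exp_zero, mul_one]

lemma hH2 (y : ℝ) : hermiteH 2 y = y^2 - 1 := by
  unfold hermiteH
  rw [iteratedDeriv_succ, iteratedDeriv_one, gderiv]
  have hd : deriv (fun y : ℝ => -y * Real.exp (-(y^2)/2)) y
      = (y^2 - 1) * Real.exp (-(y^2)/2) := by
    have h : HasDerivAt (fun z : ℝ => -z * Real.exp (-(z^2)/2))
        ((y^2 - 1) * Real.exp (-(y^2)/2)) y := by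
      have h1 : HasDerivAt (fun z : ℝ => Real.exp (-(z^2)/2)) (-y * Real.exp (-(y^2)/2)) y := by
        have := (((hasDerivAt_pow 2 y).neg.div_const 2).exp)
        simp only [Pi.neg_apply] at this
        convert this using 1
        ring
      have := ((hasDerivAt_id y).neg).mul h1
      simp only [Pi.mul_def, Pi.neg_apply, id_eq] at this
      exact this.congr_deriv (by ring)
    exact h.deriv
  rw [hd, show (-1:ℝ)^2 * Real.exp (y^2/2) * ((y^2-1) * Real.exp (-(y^2)/2)) =
      (y^2-1) * Real.exp (y^2/2 + -(y^2)/2) by rw [Real.exp_add]; ring,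
    show y^2/2 + -(y^2)/2 = (0:ℝ) by ring, Real.exp_zero, mul_one]

lemma exp_form {c : ℝ} (hc : 0 < c) (s : ℝ) : -(s^2)/(2*c) = -(1/(2*c)) * s^2 := by
  field_simp

lemma integrable_g0 {c : ℝ} (hc : 0 < c) :
    Integrable fun s : ℝ => Real.exp (-(s^2)/(2*c)) := by
  simp_rw [exp_form hc]
  exact integrable_exp_neg_mul_sq (by positivity)

lemma integrable_g1 {c : ℝ} (hc : 0 < c) :
    Integrable fun s : ℝ => s * Real.exp (-(s^2)/(2*c)) := by
  simp_rw [exp_form hc]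
  exact integrable_mul_exp_neg_mul_sq (by positivity)

lemma integrable_g2 {c : ℝ} (hc : 0 < c) :
    Integrable fun s : ℝ => s^2 * Real.exp (-(s^2)/(2*c)) := by
  simp_rw [exp_form hc]
  have := integrable_rpow_mul_exp_neg_mul_sq (b := 1/(2*c)) (by positivity) (s := 2) (by norm_num)
  simpa [Real.rpow_natCast] using this

lemma integral_g0 {c : ℝ} (hc : 0 < c) :
    ∫ s : ℝ, Real.exp (-(s^2)/(2*c)) = Real.sqrt (2*π*c) := by
  simp_rw [exp_form hc, integral_gaussian]
  rw [show π / (1/(2*c)) = 2*π*c by field_simp]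

lemma integral_g1 {c : ℝ} (hc : 0 < c) :
    ∫ s : ℝ, s * Real.exp (-(s^2)/(2*c)) = 0 := by
  simp_rw [exp_form hc]
  set b : ℝ := 1/(2*c) with hb_def
  have h := MeasureTheory.integral_neg_eq_self (fun t : ℝ => t * Real.exp (-b * t^2)) volume
  simp only [neg_sq, neg_mul] at h
  rw [integral_neg] at h
  simp only [neg_mul]
  linarith

lemma integral_sq_gaussian {b : ℝ} (hb : 0 < b) :
    ∫ s : ℝ, s^2 * Real.exp (-b * s^2) = Real.sqrt (π/b) / (2*b) := by
  have hint2 : Integrable fun x : ℝ => x^2 * Real.exp (-b * x^2) := by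
    have := integrable_rpow_mul_exp_neg_mul_sq hb (s := 2) (by norm_num)
    simpa [Real.rpow_natCast] using this
  have hd : ∀ z : ℝ, HasDerivAt (fun t : ℝ => t * Real.exp (-b * t^2))
      (Real.exp (-b * z^2) + z * (-b * (2*z) * Real.exp (-b * z^2))) z := by
    intro z
    have h1 : HasDerivAt (fun t : ℝ => Real.exp (-b * t^2)) (-b * (2*z) * Real.exp (-b * z^2)) z := by
      have := (((hasDerivAt_pow 2 z).const_mul (-b)).exp)
      convert this using 1
      ring
    have := (hasDerivAt_id z).mul h1
    simp only [Pi.mul_def, id_eq] at this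
    exact this.congr_deriv (by ring)
  have key : (fun z : ℝ => z * (-b * (2*z) * Real.exp (-b * z^2)))
      = fun z : ℝ => (-2*b) * (z^2 * Real.exp (-b * z^2)) := by funext z; ring
  have hzero := integral_eq_zero_of_hasDerivAt_of_integrable hd
    (by
      apply (integrable_exp_neg_mul_sq hb).add
      rw [key]
      exact hint2.const_mul _)
    (integrable_mul_exp_neg_mul_sq hb)
  have hsplit : ∫ z : ℝ, (Real.exp (-b * z^2) + z * (-b * (2*z) * Real.exp (-b * z^2)))
      = (∫ z : ℝ, Real.exp (-b*z^2)) + (-2*b) * ∫ z : ℝ, z^2 * Real.exp (-b*z^2) := by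
    rw [integral_add (integrable_exp_neg_mul_sq hb)]
    · congr 1
      rw [show (∫ z : ℝ, z * (-b * (2*z) * Real.exp (-b * z^2)))
          = ∫ z : ℝ, (-2*b) * (z^2 * Real.exp (-b * z^2)) by rw [key]]
      exact integral_const_mul _ _
    · rw [key]; exact hint2.const_mul _
  rw [hsplit, integral_gaussian] at hzero
  have hb' : (2*b) ≠ 0 := by positivity
  field_simp at hzero ⊢
  linarith

lemma integral_g2 {c : ℝ} (hc : 0 < c) :
    ∫ s : ℝ, s^2 * Real.exp (-(s^2)/(2*c)) = c * Real.sqrt (2*π*c) := by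
  simp_rw [exp_form hc]
  rw [integral_sq_gaussian (by positivity)]
  rw [show π / (1/(2*c)) = 2*π*c by field_simp]
  field_simp

lemma integral_quad {c : ℝ} (hc : 0 < c) (p q r : ℝ) :
    ∫ s : ℝ, (p * Real.exp (-(s^2)/(2*c)) + (q * (s * Real.exp (-(s^2)/(2*c)))
      + r * (s^2 * Real.exp (-(s^2)/(2*c)))))
    = p * Real.sqrt (2*π*c) + r * (c * Real.sqrt (2*π*c)) := by
  have h1 : Integrable (fun s : ℝ => p * Real.exp (-(s^2)/(2*c))) volume :=
    (integrable_g0 hc).const_mul p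
  have h2a : Integrable (fun s : ℝ => q * (s * Real.exp (-(s^2)/(2*c)))) volume :=
    (integrable_g1 hc).const_mul q
  have h2b : Integrable (fun s : ℝ => r * (s^2 * Real.exp (-(s^2)/(2*c)))) volume :=
    (integrable_g2 hc).const_mul r
  have h2 : Integrable (fun s : ℝ => q * (s * Real.exp (-(s^2)/(2*c)))
      + r * (s^2 * Real.exp (-(s^2)/(2*c)))) volume := h2a.add h2b
  rw [integral_add h1 h2, integral_add h2a h2b,
    integral_const_mul, integral_const_mul, integral_const_mul,
    integral_g0 hc, integral_g1 hc, integral_g2 hc]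
  ring


/-- `(g_a H_1^{[a]}) ⋆ (g_b H_1^{[b]}) = (√(2ab)/(a+b)) g_{a+b} H_2^{[a+b]}`. -/
theorem hermite1_conv (a b : ℝ) (ha : 0 < a) (hb : 0 < b) (x : ℝ) :
    ∫ t, (gauss a t * hermiteN a 1 t) * (gauss b (x - t) * hermiteN b 1 (x - t)) =
      (Real.sqrt (2 * a * b) / (a + b)) * (gauss (a + b) x * hermiteN (a + b) 2 x) := by
  have hA : 0 < a + b := by linarith
  have hc : 0 < a*b/(a+b) := by positivity
  -- abbreviations
  have hN1 : ∀ (p : ℝ) (t : ℝ), hermiteN p 1 t = t / Real.sqrt p := by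
    intro p t
    unfold hermiteN
    rw [hH1]
    norm_num [Nat.factorial]
  -- pointwise rewriting of the integrand
  have key : ∀ t : ℝ, (gauss a t * hermiteN a 1 t) * (gauss b (x - t) * hermiteN b 1 (x - t))
      = ((Real.sqrt (2*π*a))⁻¹ * (Real.sqrt (2*π*b))⁻¹ * (Real.sqrt a)⁻¹ * (Real.sqrt b)⁻¹
          * Real.exp (-(x^2)/(2*(a+b))))
        * ((t*(x-t)) * Real.exp (-((t - a*x/(a+b))^2)/(2*(a*b/(a+b))))) := by
    intro t
    unfold gauss
    rw [hN1, hN1]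
    have hexp : Real.exp (-(t^2)/(2*a)) * Real.exp (-((x-t)^2)/(2*b))
        = Real.exp (-(x^2)/(2*(a+b))) * Real.exp (-((t - a*x/(a+b))^2)/(2*(a*b/(a+b)))) := by
      rw [← Real.exp_add, ← Real.exp_add]
      congr 1
      field_simp
      ring
    have : (Real.sqrt (2*π*a))⁻¹ * Real.exp (-(t^2)/(2*a)) * (t / Real.sqrt a) *
        ((Real.sqrt (2*π*b))⁻¹ * Real.exp (-((x-t)^2)/(2*b)) * ((x-t) / Real.sqrt b))
        = ((Real.sqrt (2*π*a))⁻¹ * (Real.sqrt (2*π*b))⁻¹ * (Real.sqrt a)⁻¹ * (Real.sqrt b)⁻¹)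
          * ((t*(x-t)) * (Real.exp (-(t^2)/(2*a)) * Real.exp (-((x-t)^2)/(2*b)))) := by
      field_simp
    rw [this, hexp]
    ring
  simp_rw [key]
  rw [integral_const_mul]
  -- translation invariance
  have htrans := MeasureTheory.integral_add_right_eq_self (μ := volume)
    (fun t : ℝ => (t*(x-t)) * Real.exp (-((t - a*x/(a+b))^2)/(2*(a*b/(a+b))))) (a*x/(a+b))
  rw [← htrans]
  have hshift : ∀ s : ℝ, (fun t : ℝ => (t*(x-t)) * Real.exp (-((t - a*x/(a+b))^2)/(2*(a*b/(a+b)))))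
        (s + a*x/(a+b))
      = ((a*x/(a+b))*(x - a*x/(a+b))) * Real.exp (-(s^2)/(2*(a*b/(a+b))))
        + ((x - 2*(a*x/(a+b))) * (s * Real.exp (-(s^2)/(2*(a*b/(a+b)))))
          + (-1) * (s^2 * Real.exp (-(s^2)/(2*(a*b/(a+b)))))) := by
    intro s
    simp only
    rw [show s + a*x/(a+b) - a*x/(a+b) = s by ring]
    ring
  simp_rw [hshift]
  rw [integral_quad hc]
  -- right-hand side closed form
  unfold gauss hermiteN
  rw [hH2]
  have hsq : (x / Real.sqrt (a+b))^2 = x^2 / (a+b) := by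
    rw [div_pow, Real.sq_sqrt hA.le]
  rw [hsq]
  have hfac : ((Nat.factorial 2 : ℝ)) = 2 := by norm_num [Nat.factorial]
  rw [hfac]
  -- the key constant identity
  have hconst : ((Real.sqrt (2*π*a))⁻¹ * (Real.sqrt (2*π*b))⁻¹ * (Real.sqrt a)⁻¹ * (Real.sqrt b)⁻¹)
      * Real.sqrt (2*π*(a*b/(a+b))) * (a*b/(a+b))
      = Real.sqrt (2*a*b) / (a+b) * (Real.sqrt (2*π*(a+b)))⁻¹ * (Real.sqrt 2)⁻¹ := by
    have h1 : (0:ℝ) < 2*π*a := by positivity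
    have h2 : (0:ℝ) < 2*π*b := by positivity
    have h3 : (0:ℝ) < 2*π*(a*b/(a+b)) := by positivity
    have h4 : (0:ℝ) < 2*a*b := by positivity
    have h5 : (0:ℝ) < 2*π*(a+b) := by positivity
    refine (sq_eq_sq₀ (by positivity) (by positivity)).1 ?_
    simp only [mul_pow, div_pow, inv_pow, Real.sq_sqrt h1.le, Real.sq_sqrt h2.le,
      Real.sq_sqrt ha.le, Real.sq_sqrt hb.le, Real.sq_sqrt h3.le, Real.sq_sqrt h4.le,
      Real.sq_sqrt h5.le, Real.sq_sqrt (by norm_num : (0:ℝ) ≤ 2)]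
    have hπ : π ≠ 0 := Real.pi_ne_zero
    field_simp
  -- finish by linear combination
  have hD : (a*x/(a+b))*(x - a*x/(a+b)) - a*b/(a+b) = (a*b/(a+b)) * (x^2/(a+b) - 1) := by
    field_simp
    ring
  calc ((Real.sqrt (2*π*a))⁻¹ * (Real.sqrt (2*π*b))⁻¹ * (Real.sqrt a)⁻¹ * (Real.sqrt b)⁻¹
          * Real.exp (-(x^2)/(2*(a+b))))
        * ((a*x/(a+b))*(x - a*x/(a+b)) * Real.sqrt (2*π*(a*b/(a+b)))
          + (-1) * (a*b/(a+b) * Real.sqrt (2*π*(a*b/(a+b)))))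
      = (((Real.sqrt (2*π*a))⁻¹ * (Real.sqrt (2*π*b))⁻¹ * (Real.sqrt a)⁻¹ * (Real.sqrt b)⁻¹)
          * Real.sqrt (2*π*(a*b/(a+b))) * (a*b/(a+b)))
        * (Real.exp (-(x^2)/(2*(a+b))) * (x^2/(a+b) - 1)) := by
        rw [show ((a*x/(a+b))*(x - a*x/(a+b)) * Real.sqrt (2*π*(a*b/(a+b)))
          + (-1) * (a*b/(a+b) * Real.sqrt (2*π*(a*b/(a+b)))))
          = ((a*x/(a+b))*(x - a*x/(a+b)) - a*b/(a+b)) * Real.sqrt (2*π*(a*b/(a+b))) by ring, hD]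
        ring
    _ = (Real.sqrt (2*a*b) / (a+b) * (Real.sqrt (2*π*(a+b)))⁻¹ * (Real.sqrt 2)⁻¹)
        * (Real.exp (-(x^2)/(2*(a+b))) * (x^2/(a+b) - 1)) := by rw [hconst]
    _ = Real.sqrt (2*a*b) / (a+b) *
        ((Real.sqrt (2*π*(a+b)))⁻¹ * Real.exp (-(x^2)/(2*(a+b)))
          * ((Real.sqrt 2)⁻¹ * (x^2/(a+b) - 1))) := by ring
end

section
/- For any a, b > 0 and k, l ≥ 0, there exists a constant C (depending only on a, b, k, l) such that (g_a H_k^{[a]}) ⋆ (g_b H_l^{[b]}) = C · g_{a+b} · H_{k+l}^{[a+b]}. -/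
open MeasureTheory Real

open Polynomial in
/-- Real-coefficient Hermite polynomial. -/
noncomputable def Hr (m : ℕ) : Polynomial ℝ := (hermite m).map (algebraMap ℤ ℝ)

open Polynomial in
lemma Hr_zero : Hr 0 = 1 := by simp [Hr, hermite_zero]

open Polynomial in
lemma Hr_succ (m : ℕ) : Hr (m + 1) = X * Hr m - derivative (Hr m) := by
  unfold Hr
  rw [hermite_succ, Polynomial.map_sub, Polynomial.map_mul, Polynomial.map_X, derivative_map]

open Polynomial in
lemma hermiteH_eq_eval (k : ℕ) (x : ℝ) : hermiteH k x = (Hr k).eval x := by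
  have h : (fun y : ℝ => Real.exp (-(y ^ 2) / 2)) = fun y : ℝ => Real.exp (-(y ^ 2 / 2)) := by
    funext y; rw [neg_div]
  have he : (Hr k).eval x = aeval x (hermite k) := by
    unfold Hr; rw [eval_map, aeval_def]
  rw [hermiteH, h, iteratedDeriv_eq_iterate, deriv_gaussian_eq_hermite_mul_gaussian, he]
  have : (-1 : ℝ) ^ k * Real.exp (x ^ 2 / 2) *
      ((-1 : ℝ) ^ k * aeval x (hermite k) * Real.exp (-(x ^ 2 / 2)))
      = ((-1 : ℝ) ^ k) ^ 2 * (Real.exp (x ^ 2 / 2) * Real.exp (-(x ^ 2 / 2)))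
        * aeval x (hermite k) := by ring
  rw [this, ← Real.exp_add, add_neg_cancel, Real.exp_zero, ← pow_mul, mul_comm k 2, pow_mul]
  norm_num
lemma gauss_continuous (p : ℝ) : Continuous (gauss p) := by
  unfold gauss
  exact continuous_const.mul (Real.continuous_exp.comp ((continuous_pow 2).neg.div_const _))

lemma gauss_pos {p : ℝ} (hp : 0 < p) (x : ℝ) : 0 < gauss p x := by
  unfold gauss
  have : (0:ℝ) < Real.sqrt (2 * Real.pi * p) := Real.sqrt_pos.mpr (by positivity)
  positivity

lemma hasDerivAt_gauss {p : ℝ} (hp : 0 < p) (x : ℝ) :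
    HasDerivAt (gauss p) (-(x / p) * gauss p x) x := by
  have h1 : HasDerivAt (fun x : ℝ => -(x ^ 2) / (2 * p)) (-(2 * x ^ 1) / (2 * p)) x :=
    ((hasDerivAt_pow 2 x).neg).div_const _
  have h2 := ((h1.exp).const_mul ((Real.sqrt (2 * Real.pi * p))⁻¹))
  refine h2.congr_deriv ?_
  unfold gauss
  field_simp

/-- `(-(√p)⁻¹)^m * H_m(x/√p) * gauss p x`, i.e. the m-th derivative of `gauss p`. -/
noncomputable def Qg (p : ℝ) (m : ℕ) (x : ℝ) : ℝ :=
  (-(Real.sqrt p)⁻¹) ^ m * ((Hr m).eval (x / Real.sqrt p) * gauss p x)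

lemma Qg_zero (p : ℝ) (x : ℝ) : Qg p 0 x = gauss p x := by
  simp [Qg, Hr_zero]

lemma Qg_continuous (p : ℝ) (m : ℕ) : Continuous (Qg p m) := by
  unfold Qg
  exact continuous_const.mul
    (((Hr m).continuous.comp (continuous_id.div_const _)).mul (gauss_continuous p))

open Polynomial in
lemma hasDerivAt_Qg {p : ℝ} (hp : 0 < p) (m : ℕ) (x : ℝ) :
    HasDerivAt (Qg p m) (Qg p (m + 1) x) x := by
  have hs : Real.sqrt p * Real.sqrt p = p := Real.mul_self_sqrt hp.le
  have hs0 : Real.sqrt p ≠ 0 := by positivity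
  have hA : HasDerivAt (fun x : ℝ => (Hr m).eval (x / Real.sqrt p))
      ((derivative (Hr m)).eval (x / Real.sqrt p) * (1 / Real.sqrt p)) x :=
    by have := ((Hr m).hasDerivAt (x / Real.sqrt p)).comp x ((hasDerivAt_id x).div_const (Real.sqrt p)); exact this
  have h := ((hA.mul (hasDerivAt_gauss hp x)).const_mul ((-(Real.sqrt p)⁻¹) ^ m))
  refine h.congr_deriv ?_
  rw [Qg, Hr_succ, Polynomial.eval_sub, Polynomial.eval_mul, Polynomial.eval_X, pow_succ]
  have hxp : x / p = (Real.sqrt p)⁻¹ * (x / Real.sqrt p) := by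
    rw [inv_mul_eq_div, div_div, hs]
  rw [hxp]
  ring
lemma pow_mul_exp_bound (n : ℕ) (y : ℝ) :
    |y| ^ n * Real.exp (-(y ^ 2) / 4) ≤ max 1 ((n.factorial : ℝ) * 4 ^ n) := by
  rcases le_total (|y|) 1 with h | h
  · have h1 : |y| ^ n ≤ 1 := pow_le_one₀ (abs_nonneg y) h
    have h2 : Real.exp (-(y ^ 2) / 4) ≤ 1 := by
      rw [Real.exp_le_one_iff]
      have : (0:ℝ) ≤ y ^ 2 := sq_nonneg y
      linarith
    calc |y| ^ n * Real.exp (-(y ^ 2) / 4) ≤ 1 * 1 :=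
          mul_le_mul h1 h2 (Real.exp_pos _).le one_pos.le
      _ ≤ _ := by simp
  · refine le_trans ?_ (le_max_right _ _)
    have hy : (0:ℝ) < |y| := lt_of_lt_of_le one_pos h
    have hy0 : y ≠ 0 := abs_pos.mp hy
    have hu : (0:ℝ) < y ^ 2 / 4 := by positivity
    have key := Real.pow_div_factorial_le_exp (y ^ 2 / 4) hu.le n
    have hfac : (0:ℝ) < (n.factorial : ℝ) := by positivity
    have hexp : Real.exp (-(y ^ 2) / 4) ≤ (n.factorial : ℝ) / (y ^ 2 / 4) ^ n := by
      rw [neg_div, Real.exp_neg, inv_le_comm₀ (Real.exp_pos _) (by positivity), inv_div]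
      exact key
    have hA : (0:ℝ) < |y| ^ n := pow_pos hy n
    have hupow : (y ^ 2 / 4) ^ n = (|y| ^ n) ^ 2 / 4 ^ n := by
      rw [div_pow, ← sq_abs y, ← pow_mul, ← pow_mul, mul_comm]
    calc |y| ^ n * Real.exp (-(y ^ 2) / 4)
        ≤ |y| ^ n * ((n.factorial : ℝ) / (y ^ 2 / 4) ^ n) :=
          mul_le_mul_of_nonneg_left hexp (by positivity)
      _ = (n.factorial : ℝ) * 4 ^ n / |y| ^ n := by
          rw [hupow]; field_simp
      _ ≤ (n.factorial : ℝ) * 4 ^ n / 1 := by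
          apply div_le_div_of_nonneg_left (by positivity) one_pos
          exact one_le_pow₀ h
      _ = _ := by simp
open Polynomial Finset in
lemma poly_mul_exp_bound (q : Polynomial ℝ) : ∃ M : ℝ, 0 ≤ M ∧
    ∀ y : ℝ, |q.eval y| * Real.exp (-(y ^ 2) / 4) ≤ M := by
  refine ⟨∑ i ∈ range (q.natDegree + 1), |q.coeff i| * max 1 ((i.factorial : ℝ) * 4 ^ i),
    Finset.sum_nonneg fun i _ => by positivity, fun y => ?_⟩
  have h1 : |q.eval y| ≤ ∑ i ∈ range (q.natDegree + 1), |q.coeff i| * |y| ^ i := by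
    rw [eval_eq_sum_range]
    refine (Finset.abs_sum_le_sum_abs _ _).trans ?_
    apply Finset.sum_le_sum
    intro i _
    rw [abs_mul, abs_pow]
  calc |q.eval y| * Real.exp (-(y ^ 2) / 4)
      ≤ (∑ i ∈ range (q.natDegree + 1), |q.coeff i| * |y| ^ i) * Real.exp (-(y ^ 2) / 4) :=
        mul_le_mul_of_nonneg_right h1 (Real.exp_pos _).le
    _ = ∑ i ∈ range (q.natDegree + 1), |q.coeff i| * (|y| ^ i * Real.exp (-(y ^ 2) / 4)) := by
        rw [Finset.sum_mul]; congr 1; funext i; ring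
    _ ≤ _ := by
        apply Finset.sum_le_sum
        intro i _
        exact mul_le_mul_of_nonneg_left (pow_mul_exp_bound i y) (abs_nonneg _)

lemma Qg_bound {p : ℝ} (hp : 0 < p) (m : ℕ) : ∃ M : ℝ, 0 ≤ M ∧
    ∀ x : ℝ, |Qg p m x| ≤ M * Real.exp (-(x ^ 2) / (4 * p)) := by
  obtain ⟨M, hM0, hM⟩ := poly_mul_exp_bound (Hr m)
  have hs : Real.sqrt p * Real.sqrt p = p := Real.mul_self_sqrt hp.le
  have hs0 : (0:ℝ) < Real.sqrt p := Real.sqrt_pos.mpr hp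
  refine ⟨((Real.sqrt p)⁻¹) ^ m * (Real.sqrt (2 * Real.pi * p))⁻¹ * M, by positivity, fun x => ?_⟩
  have hysq : (x / Real.sqrt p) ^ 2 = x ^ 2 / p := by
    rw [div_pow, Real.sq_sqrt hp.le]
  have hexp : Real.exp (-(x ^ 2) / (2 * p)) =
      Real.exp (-((x / Real.sqrt p) ^ 2) / 4) * Real.exp (-(x ^ 2) / (4 * p)) := by
    rw [← Real.exp_add, hysq]
    congr 1
    field_simp
    ring
  have : |Qg p m x| = ((Real.sqrt p)⁻¹) ^ m * (Real.sqrt (2 * Real.pi * p))⁻¹ *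
      (|(Hr m).eval (x / Real.sqrt p)| * Real.exp (-((x / Real.sqrt p) ^ 2) / 4)) *
      Real.exp (-(x ^ 2) / (4 * p)) := by
    rw [Qg, gauss, abs_mul, abs_mul, abs_pow, abs_neg, abs_inv, abs_of_pos hs0, abs_mul,
      abs_of_pos (by positivity : (0:ℝ) < (Real.sqrt (2 * Real.pi * p))⁻¹),
      abs_of_pos (Real.exp_pos _), hexp]
    ring
  rw [this]
  have hb := hM (x / Real.sqrt p)
  calc _ ≤ ((Real.sqrt p)⁻¹) ^ m * (Real.sqrt (2 * Real.pi * p))⁻¹ * M *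
      Real.exp (-(x ^ 2) / (4 * p)) := by
        apply mul_le_mul_of_nonneg_right _ (Real.exp_pos _).le
        exact mul_le_mul_of_nonneg_left hb (by positivity)
    _ = _ := rfl
lemma integrable_decay {p : ℝ} (hp : 0 < p) :
    Integrable (fun x : ℝ => Real.exp (-(x ^ 2) / (4 * p))) := by
  have h : (0:ℝ) < 1 / (4 * p) := by positivity
  have heq : (fun x : ℝ => Real.exp (-(x ^ 2) / (4 * p)))
      = fun x : ℝ => Real.exp (-(1 / (4 * p)) * x ^ 2) := by
    funext x; congr 1; field_simp
  rw [heq]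
  exact integrable_exp_neg_mul_sq h

lemma conv_integrable {a b : ℝ} (ha : 0 < a) (hb : 0 < b) (k l : ℕ) (x : ℝ) :
    Integrable (fun t : ℝ => Qg a k t * Qg b l (x - t)) := by
  obtain ⟨M₁, hM₁0, hM₁⟩ := Qg_bound ha k
  obtain ⟨M₂, hM₂0, hM₂⟩ := Qg_bound hb l
  apply Integrable.mono' ((integrable_decay ha).const_mul (M₁ * M₂))
  · exact ((Qg_continuous a k).mul ((Qg_continuous b l).comp
      (continuous_const.sub continuous_id))).aestronglyMeasurable
  · refine Filter.Eventually.of_forall fun t => ?_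
    rw [Real.norm_eq_abs, abs_mul]
    have h2 : |Qg b l (x - t)| ≤ M₂ := by
      refine (hM₂ (x - t)).trans ?_
      have : Real.exp (-((x - t) ^ 2) / (4 * b)) ≤ 1 := by
        rw [Real.exp_le_one_iff]
        have : (0:ℝ) ≤ (x - t) ^ 2 := sq_nonneg _
        rw [neg_div]
        simp only [Left.neg_nonpos_iff]
        positivity
      calc M₂ * Real.exp (-((x - t) ^ 2) / (4 * b)) ≤ M₂ * 1 :=
            mul_le_mul_of_nonneg_left this hM₂0
        _ = M₂ := mul_one _
    calc |Qg a k t| * |Qg b l (x - t)| ≤ (M₁ * Real.exp (-(t ^ 2) / (4 * a))) * M₂ :=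
          mul_le_mul (hM₁ t) h2 (abs_nonneg _) (by positivity)
      _ = M₁ * M₂ * Real.exp (-(t ^ 2) / (4 * a)) := by ring

lemma gauss_integral {v : ℝ} (hv : 0 < v) : ∫ s : ℝ, gauss v s = 1 := by
  unfold gauss
  rw [MeasureTheory.integral_const_mul]
  have h : (0:ℝ) < 1 / (2 * v) := by positivity
  have heq : (fun s : ℝ => Real.exp (-(s ^ 2) / (2 * v)))
      = fun s : ℝ => Real.exp (-(1 / (2 * v)) * s ^ 2) := by
    funext s; congr 1; field_simp
  rw [heq, integral_gaussian]
  have h1 : Real.pi / (1 / (2 * v)) = 2 * Real.pi * v := by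
    field_simp
  rw [h1]
  have : Real.sqrt (2 * Real.pi * v) ≠ 0 := by positivity
  field_simp

lemma gauss_conv {a b : ℝ} (ha : 0 < a) (hb : 0 < b) (x : ℝ) :
    ∫ t : ℝ, gauss a t * gauss b (x - t) = gauss (a + b) x := by
  set v : ℝ := a * b / (a + b) with hv_def
  set m : ℝ := a * x / (a + b) with hm_def
  have hab : (0:ℝ) < a + b := by linarith
  have hv : 0 < v := by positivity
  have key : ∀ t : ℝ, gauss a t * gauss b (x - t) = gauss (a + b) x * gauss v (t - m) := by
    intro t
    unfold gauss
    rw [mul_mul_mul_comm, mul_mul_mul_comm ((Real.sqrt (2 * Real.pi * (a + b)))⁻¹)]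
    congr 1
    · rw [← mul_inv, ← mul_inv, ← Real.sqrt_mul (by positivity), ← Real.sqrt_mul (by positivity)]
      congr 2
      rw [hv_def]
      field_simp
    · rw [← Real.exp_add, ← Real.exp_add]
      congr 1
      rw [hv_def, hm_def]
      field_simp
      ring
  simp_rw [key]
  rw [MeasureTheory.integral_const_mul, MeasureTheory.integral_sub_right_eq_self (gauss v) m,
    gauss_integral hv, mul_one]
lemma conv_comm (u v : ℝ → ℝ) (x : ℝ) :
    ∫ t : ℝ, u t * v (x - t) = ∫ t : ℝ, v t * u (x - t) := by
  have h := MeasureTheory.integral_sub_left_eq_self (fun t : ℝ => v t * u (x - t)) volume x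
  simp only [sub_sub_cancel] at h
  rw [← h]
  congr 1; funext t; ring

lemma conv_hasDeriv {a b : ℝ} (ha : 0 < a) (hb : 0 < b) (k l : ℕ) (x₀ : ℝ) :
    HasDerivAt (fun x => ∫ t : ℝ, Qg a k t * Qg b l (x - t))
      (∫ t : ℝ, Qg a k t * Qg b (l + 1) (x₀ - t)) x₀ := by
  obtain ⟨M₁, hM₁0, hM₁⟩ := Qg_bound ha k
  obtain ⟨M₂, hM₂0, hM₂⟩ := Qg_bound hb (l + 1)
  have hmeas : ∀ x : ℝ, AEStronglyMeasurable (fun t : ℝ => Qg a k t * Qg b l (x - t)) volume :=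
    fun x => ((Qg_continuous a k).mul ((Qg_continuous b l).comp
      (continuous_const.sub continuous_id))).aestronglyMeasurable
  have hmeas' : AEStronglyMeasurable (fun t : ℝ => Qg a k t * Qg b (l + 1) (x₀ - t)) volume :=
    ((Qg_continuous a k).mul ((Qg_continuous b (l + 1)).comp
      (continuous_const.sub continuous_id))).aestronglyMeasurable
  have hbound : ∀ᵐ t : ℝ ∂volume, ∀ x ∈ Metric.ball x₀ 1,
      ‖Qg a k t * Qg b (l + 1) (x - t)‖ ≤ M₁ * M₂ * Real.exp (-(t ^ 2) / (4 * a)) := by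
    refine Filter.Eventually.of_forall fun t => fun x _ => ?_
    rw [Real.norm_eq_abs, abs_mul]
    have h2 : |Qg b (l + 1) (x - t)| ≤ M₂ := by
      refine (hM₂ (x - t)).trans ?_
      have hle : Real.exp (-((x - t) ^ 2) / (4 * b)) ≤ 1 := by
        rw [Real.exp_le_one_iff, neg_div]
        simp only [Left.neg_nonpos_iff]
        positivity
      calc M₂ * Real.exp (-((x - t) ^ 2) / (4 * b)) ≤ M₂ * 1 :=
            mul_le_mul_of_nonneg_left hle hM₂0
        _ = M₂ := mul_one _
    calc |Qg a k t| * |Qg b (l + 1) (x - t)| ≤ (M₁ * Real.exp (-(t ^ 2) / (4 * a))) * M₂ :=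
          mul_le_mul (hM₁ t) h2 (abs_nonneg _) (by positivity)
      _ = M₁ * M₂ * Real.exp (-(t ^ 2) / (4 * a)) := by ring
  have hdiff : ∀ᵐ t : ℝ ∂volume, ∀ x ∈ Metric.ball x₀ 1,
      HasDerivAt (fun x => Qg a k t * Qg b l (x - t)) (Qg a k t * Qg b (l + 1) (x - t)) x := by
    refine Filter.Eventually.of_forall fun t => fun x _ => ?_
    have h1 : HasDerivAt (fun x : ℝ => Qg b l (x - t)) (Qg b (l + 1) (x - t)) x := by
      exact (hasDerivAt_Qg hb l (x - t)).comp_sub_const x t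
    simpa using h1.const_mul (Qg a k t)
  exact (hasDerivAt_integral_of_dominated_loc_of_deriv_le (Metric.ball_mem_nhds x₀ one_pos)
    (Filter.Eventually.of_forall fun x => hmeas x) (conv_integrable ha hb k l x₀)
    hmeas' hbound (((integrable_decay ha).const_mul (M₁ * M₂))) hdiff).2

lemma conv_step {a b : ℝ} (ha : 0 < a) (hb : 0 < b) (k l : ℕ)
    (IH : ∀ x : ℝ, ∫ t : ℝ, Qg a k t * Qg b l (x - t) = Qg (a + b) (k + l) x) (x : ℝ) :
    ∫ t : ℝ, Qg a k t * Qg b (l + 1) (x - t) = Qg (a + b) (k + l + 1) x := by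
  have hab : (0:ℝ) < a + b := by linarith
  have h1 := conv_hasDeriv ha hb k l x
  have h2 : HasDerivAt (fun y => ∫ t : ℝ, Qg a k t * Qg b l (y - t))
      (Qg (a + b) (k + l + 1) x) x := by
    have heq : (fun y => ∫ t : ℝ, Qg a k t * Qg b l (y - t)) = Qg (a + b) (k + l) :=
      funext IH
    rw [heq]
    exact hasDerivAt_Qg hab (k + l) x
  exact h1.unique h2

lemma conv_Qg {a b : ℝ} (ha : 0 < a) (hb : 0 < b) (k l : ℕ) (x : ℝ) :
    ∫ t : ℝ, Qg a k t * Qg b l (x - t) = Qg (a + b) (k + l) x := by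
  induction l generalizing x with
  | zero =>
    induction k generalizing x with
    | zero =>
      show (∫ t : ℝ, Qg a 0 t * Qg b 0 (x - t)) = Qg (a + b) (0 + 0) x
      simp only [Nat.add_zero, Qg_zero]
      exact gauss_conv ha hb x
    | succ k IHk =>
      rw [conv_comm]
      have IH' : ∀ x : ℝ, ∫ t : ℝ, Qg b 0 t * Qg a k (x - t) = Qg (b + a) (0 + k) x := by
        intro y
        rw [conv_comm]
        rw [IHk y]
        rw [add_comm b a, Nat.zero_add, Nat.add_zero]
      have := conv_step hb ha 0 k IH' x
      rw [this, add_comm b a]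
      congr 1
      omega
  | succ l IHl =>
    exact conv_step ha hb k l (fun y => IHl y) x
lemma gauss_mul_hermiteN {p : ℝ} (hp : 0 < p) (m : ℕ) (y : ℝ) :
    gauss p y * hermiteN p m y =
      (Real.sqrt (Nat.factorial m))⁻¹ * (-(Real.sqrt p)) ^ m * Qg p m y := by
  have hs0 : Real.sqrt p ≠ 0 := ne_of_gt (Real.sqrt_pos.mpr hp)
  rw [hermiteN, hermiteH_eq_eval, Qg]
  have h1 : (-(Real.sqrt p)) ^ m * (-(Real.sqrt p)⁻¹) ^ m = 1 := by
    rw [← mul_pow, neg_mul_neg, mul_inv_cancel₀ hs0, one_pow]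
  have h2 : (-(Real.sqrt p)) ^ m * ((-(Real.sqrt p)⁻¹) ^ m *
      ((Hr m).eval (y / Real.sqrt p) * gauss p y)) =
      (Hr m).eval (y / Real.sqrt p) * gauss p y := by
    rw [← mul_assoc, h1, one_mul]
  rw [mul_assoc ((Real.sqrt (Nat.factorial m))⁻¹), h2]
  ring


/-- `(g_a H_k^{[a]}) ⋆ (g_b H_l^{[b]}) = C g_{a+b} H_{k+l}^{[a+b]}` for some constant `C`. -/
theorem hermite_conv_general (a b : ℝ) (ha : 0 < a) (hb : 0 < b) (k l : ℕ) :
    ∃ C : ℝ, ∀ x : ℝ,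
      ∫ t, (gauss a t * hermiteN a k t) * (gauss b (x - t) * hermiteN b l (x - t)) =
        C * (gauss (a + b) x * hermiteN (a + b) (k + l) x) := by
  have hab : (0:ℝ) < a + b := by linarith
  set D : ℝ := (Real.sqrt (Nat.factorial k))⁻¹ * (-(Real.sqrt a)) ^ k *
    ((Real.sqrt (Nat.factorial l))⁻¹ * (-(Real.sqrt b)) ^ l) with hD
  refine ⟨D * Real.sqrt (Nat.factorial (k + l)) * (-(Real.sqrt (a + b))⁻¹) ^ (k + l),
    fun x => ?_⟩
  have hF : (0:ℝ) < Real.sqrt (Nat.factorial (k + l)) := Real.sqrt_pos.mpr (by positivity)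
  have hs0 : Real.sqrt (a + b) ≠ 0 := ne_of_gt (Real.sqrt_pos.mpr hab)
  have e1 : Real.sqrt (Nat.factorial (k + l)) * (Real.sqrt (Nat.factorial (k + l)))⁻¹ = 1 :=
    mul_inv_cancel₀ (ne_of_gt hF)
  have e2 : (-(Real.sqrt (a + b))⁻¹) ^ (k + l) * (-(Real.sqrt (a + b))) ^ (k + l) = 1 := by
    rw [← mul_pow, neg_mul_neg, inv_mul_cancel₀ hs0, one_pow]
  calc ∫ t, (gauss a t * hermiteN a k t) * (gauss b (x - t) * hermiteN b l (x - t))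
      = ∫ t, D * (Qg a k t * Qg b l (x - t)) := by
        congr 1; funext t
        rw [gauss_mul_hermiteN ha, gauss_mul_hermiteN hb, hD]; ring
    _ = D * ∫ t, Qg a k t * Qg b l (x - t) := MeasureTheory.integral_const_mul _ _
    _ = D * Qg (a + b) (k + l) x := by rw [conv_Qg ha hb]
    _ = D * Real.sqrt (Nat.factorial (k + l)) * (-(Real.sqrt (a + b))⁻¹) ^ (k + l) *
        (gauss (a + b) x * hermiteN (a + b) (k + l) x) := by
        rw [gauss_mul_hermiteN hab]
        have hre : D * Real.sqrt (Nat.factorial (k + l)) * (-(Real.sqrt (a + b))⁻¹) ^ (k + l) *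
            ((Real.sqrt (Nat.factorial (k + l)))⁻¹ * (-(Real.sqrt (a + b))) ^ (k + l) *
              Qg (a + b) (k + l) x) =
            D * ((Real.sqrt (Nat.factorial (k + l)) * (Real.sqrt (Nat.factorial (k + l)))⁻¹) *
              (((-(Real.sqrt (a + b))⁻¹) ^ (k + l) * (-(Real.sqrt (a + b))) ^ (k + l)) *
                Qg (a + b) (k + l) x)) := by ring
        rw [hre, e1, e2, one_mul, one_mul]
end

section
/- Define F_k(a,p) = (a^2/(p a^2 + 1))^k − (a^k − 1)^2/(p a^2 + p + 1)^k for a, p > 0 and integer k ≥ 2. Then for each fixed p > 0 and k ≥ 2, the function a ↦ F_k(a,p) on (0,∞) has exactly one zero a₀, is negative on (0, a₀), and is positive on (a₀, ∞). -/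
/-- Second-order sum-rate gain of Hermite-`k` perturbations on the symmetric
Gaussian interference channel. -/
noncomputable def Fgain (k : ℕ) (a p : ℝ) : ℝ :=
  (a ^ 2 / (p * a ^ 2 + 1)) ^ k - (a ^ k - 1) ^ 2 / (p * a ^ 2 + p + 1) ^ k

/-- Auxiliary numerator function whose sign agrees with `Fgain`. -/
noncomputable def Psi (k : ℕ) (p a : ℝ) : ℝ :=
  (a ^ 2 * (p * a ^ 2 + p + 1) / (p * a ^ 2 + 1)) ^ k - (a ^ k - 1) ^ 2

lemma Fgain_eq_Psi (k : ℕ) (p a : ℝ) (hp : 0 < p) :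
    Fgain k a p = Psi k p a / (p * a ^ 2 + p + 1) ^ k := by
  have h1 : (0:ℝ) < p * a ^ 2 + 1 := by positivity
  have h2 : (0:ℝ) < p * a ^ 2 + p + 1 := by positivity
  have key : a ^ 2 / (p * a ^ 2 + 1)
      = (a ^ 2 * (p * a ^ 2 + p + 1) / (p * a ^ 2 + 1)) / (p * a ^ 2 + p + 1) := by
    field_simp
  unfold Fgain Psi
  rw [key, div_pow, sub_div]

lemma hfun_lt (p a b : ℝ) (hp : 0 < p) (ha : 0 < a) (hab : a < b) :
    a ^ 2 * (p * a ^ 2 + p + 1) / (p * a ^ 2 + 1)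
      < b ^ 2 * (p * b ^ 2 + p + 1) / (p * b ^ 2 + 1) := by
  have h1 : (0:ℝ) < p * a ^ 2 + 1 := by positivity
  have h2 : (0:ℝ) < p * b ^ 2 + 1 := by positivity
  have hb : 0 < b := ha.trans hab
  have h3 : 0 < b ^ 2 - a ^ 2 := by nlinarith
  rw [div_lt_div_iff₀ h1 h2]
  nlinarith [mul_pos h3 (mul_pos (mul_pos hp hp) (mul_pos (pow_pos ha 2) (pow_pos hb 2))),
    mul_pos h3 hp, mul_pos (mul_pos h3 hp) (pow_pos ha 2),
    mul_pos (mul_pos h3 hp) (pow_pos hb 2)]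

lemma Psi_strictMono (k : ℕ) (hk : 2 ≤ k) (p : ℝ) (hp : 0 < p)
    {a b : ℝ} (ha : 0 < a) (hab : a < b) (hb1 : b ≤ 1) :
    Psi k p a < Psi k p b := by
  have hk0 : k ≠ 0 := by omega
  have hb : 0 < b := ha.trans hab
  have hh := hfun_lt p a b hp ha hab
  have hha : 0 ≤ a ^ 2 * (p * a ^ 2 + p + 1) / (p * a ^ 2 + 1) := by positivity
  have hpow := pow_lt_pow_left₀ hh hha hk0
  have hak : a ^ k < b ^ k := pow_lt_pow_left₀ hab ha.le hk0
  have hbk : b ^ k ≤ 1 := pow_le_one₀ hb.le hb1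
  have hsq : (b ^ k - 1) ^ 2 < (a ^ k - 1) ^ 2 := by nlinarith
  unfold Psi
  linarith

lemma Psi_pos_of_one_lt (k : ℕ) (hk : 2 ≤ k) (p : ℝ) (hp : 0 < p)
    {a : ℝ} (ha : 1 < a) : 0 < Psi k p a := by
  have hk0 : k ≠ 0 := by omega
  have ha0 : (0:ℝ) < a := by linarith
  have h1 : (0:ℝ) < p * a ^ 2 + 1 := by positivity
  have hh : a ^ 2 < a ^ 2 * (p * a ^ 2 + p + 1) / (p * a ^ 2 + 1) := by
    rw [lt_div_iff₀ h1]
    nlinarith [pow_pos ha0 2]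
  have hpow : (a ^ 2) ^ k < (a ^ 2 * (p * a ^ 2 + p + 1) / (p * a ^ 2 + 1)) ^ k :=
    pow_lt_pow_left₀ hh (by positivity) hk0
  have hak : 1 < a ^ k := one_lt_pow₀ ha hk0
  have he : (a ^ 2) ^ k = (a ^ k) ^ 2 := by
    rw [← pow_mul, ← pow_mul, mul_comm]
  have h2 : (a ^ k - 1) ^ 2 < (a ^ 2) ^ k := by nlinarith
  unfold Psi
  linarith

lemma Psi_one_pos (k : ℕ) (p : ℝ) (hp : 0 < p) : 0 < Psi k p 1 := by
  unfold Psi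
  norm_num
  positivity

lemma Psi_eps_neg (k : ℕ) (hk : 2 ≤ k) (p : ℝ) (hp : 0 < p) :
    Psi k p (min (1/2 : ℝ) (1/(2*(2*p+1)))) < 0 := by
  set ε := min (1/2 : ℝ) (1/(2*(2*p+1))) with hεdef
  have hε0 : 0 < ε := lt_min (by norm_num) (by positivity)
  have hε2 : ε ≤ 1/2 := min_le_left _ _
  have hε3 : ε ≤ 1/(2*(2*p+1)) := min_le_right _ _
  have hε3' : ε * (2*(2*p+1)) ≤ 1 := by
    rw [div_eq_mul_inv] at hε3
    have h2p : (0:ℝ) < 2*(2*p+1) := by positivity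
    calc ε * (2*(2*p+1)) ≤ (1 * (2*(2*p+1))⁻¹) * (2*(2*p+1)) := by
          apply mul_le_mul_of_nonneg_right hε3 h2p.le
      _ = 1 := by field_simp
  have h1 : (0:ℝ) < p * ε ^ 2 + 1 := by positivity
  set h := ε ^ 2 * (p * ε ^ 2 + p + 1) / (p * ε ^ 2 + 1) with hhdef
  have hh0 : 0 ≤ h := by positivity
  have hε4 : ε ^ 2 ≤ 1/4 := by nlinarith
  have ha' : ε * (2*p+1) ≤ 1/2 := by nlinarith [hε3']
  have hb : ε ^ 2 * (2*p+1) ≤ 1/4 := by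
    nlinarith [mul_le_mul_of_nonneg_left ha' hε0.le]
  have hh4 : h ≤ 1/4 := by
    rw [hhdef, div_le_iff₀ h1]
    nlinarith [hb, hε4, mul_le_mul_of_nonneg_left hε4 (mul_nonneg hp.le (sq_nonneg ε))]
  have hpowh : h ^ k ≤ (1/4 : ℝ) ^ k := pow_le_pow_left₀ hh0 hh4 k
  have hpowh2 : (1/4 : ℝ) ^ k ≤ (1/4 : ℝ) ^ 2 :=
    pow_le_pow_of_le_one (by norm_num) (by norm_num) hk
  have hεk : ε ^ k ≤ ε ^ 2 := pow_le_pow_of_le_one hε0.le (by linarith) hk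
  have hεk0 : 0 ≤ ε ^ k := by positivity
  have hsq : (9:ℝ)/16 ≤ (ε ^ k - 1) ^ 2 := by nlinarith
  unfold Psi
  have : h ^ k ≤ 1/16 := by
    calc h ^ k ≤ (1/4:ℝ) ^ k := hpowh
      _ ≤ (1/4:ℝ) ^ 2 := hpowh2
      _ = 1/16 := by norm_num
  rw [← hhdef]
  linarith

/-- For each `p > 0` and `k ≥ 2`, `a ↦ F_k(a,p)` has a unique positive root `a₀`,
is negative on `(0, a₀)` and positive on `(a₀, ∞)`. -/
theorem Fgain_unique_root (k : ℕ) (hk : 2 ≤ k) (p : ℝ) (hp : 0 < p) :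
    ∃ a₀ : ℝ, 0 < a₀ ∧ Fgain k a₀ p = 0 ∧
      (∀ a : ℝ, 0 < a → a < a₀ → Fgain k a p < 0) ∧
      (∀ a : ℝ, a₀ < a → 0 < Fgain k a p) := by
  set ε := min (1/2 : ℝ) (1/(2*(2*p+1))) with hεdef
  have hε0 : 0 < ε := lt_min (by norm_num) (by positivity)
  have hε2 : ε ≤ 1/2 := min_le_left _ _
  have hε1 : ε ≤ 1 := by linarith
  have cont : ContinuousOn (Psi k p) (Set.Icc ε 1) := by
    apply Continuous.continuousOn
    unfold Psi
    apply Continuous.sub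
    · exact (Continuous.div (by continuity) (by continuity) (fun x => by positivity)).pow k
    · continuity
  have hivt := intermediate_value_Icc hε1 cont
  have h0mem : (0:ℝ) ∈ Set.Icc (Psi k p ε) (Psi k p 1) :=
    ⟨(Psi_eps_neg k hk p hp).le, (Psi_one_pos k p hp).le⟩
  obtain ⟨a₀, ha₀mem, ha₀⟩ := hivt h0mem
  obtain ⟨ha₀ε, ha₀1⟩ := ha₀mem
  have ha₀0 : 0 < a₀ := lt_of_lt_of_le hε0 ha₀ε
  have hden : ∀ a : ℝ, (0:ℝ) < (p * a ^ 2 + p + 1) ^ k := fun a => by positivity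
  refine ⟨a₀, ha₀0, ?_, ?_, ?_⟩
  · rw [Fgain_eq_Psi k p a₀ hp, ha₀, zero_div]
  · intro a ha hlt
    rw [Fgain_eq_Psi k p a hp]
    apply div_neg_of_neg_of_pos _ (hden a)
    have := Psi_strictMono k hk p hp ha hlt ha₀1
    linarith [this, ha₀.symm ▸ this]
  · intro a hgt
    rw [Fgain_eq_Psi k p a hp]
    apply div_pos _ (hden a)
    rcases le_or_gt a 1 with hle | hgt1
    · have := Psi_strictMono k hk p hp ha₀0 hgt hle
      linarith
    · exact Psi_pos_of_one_lt k hk p hp hgt1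
end

section
/- For p = 1, the four threshold functions satisfy T₁ < T₂ < T₃, where T₁ is the unique positive root of a^3 + a − 1/2 = 0, T₂ is the unique positive root of a ↦ F_2(a,1), and T₃ is the unique positive root of a ↦ F_3(a,1). Numerically T₁ ≈ 0.424, T₂ ≈ 0.605, T₃ ≈ 0.680; in particular 0.42 < T₁ < 0.43 < 0.60 < T₂ < 0.61 < 0.67 < T₃ < 0.69. -/
set_option maxHeartbeats 2000000 in
/-- For `p = 1`: the positive root `T₁` of `a³ + a − 1/2`, the positive root `T₂` of
`F₂(·,1)` and the positive root `T₃` of `F₃(·,1)` satisfy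
`0.42 < T₁ < 0.43 < 0.60 < T₂ < 0.61 < 0.67 < T₃ < 0.69`; in particular `T₁ < T₂ < T₃`. -/
theorem threshold_ordering (T₁ T₂ T₃ : ℝ)
    (h₁ : 0 < T₁ ∧ T₁ ^ 3 + T₁ - 1 / 2 = 0)
    (h₂ : 0 < T₂ ∧ Fgain 2 T₂ 1 = 0)
    (h₃ : 0 < T₃ ∧ Fgain 3 T₃ 1 = 0) :
    0.42 < T₁ ∧ T₁ < 0.43 ∧ 0.60 < T₂ ∧ T₂ < 0.61 ∧ 0.67 < T₃ ∧ T₃ < 0.69 := by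
  obtain ⟨hp1, he1⟩ := h₁
  obtain ⟨hp2, he2⟩ := h₂
  obtain ⟨hp3, he3⟩ := h₃
  unfold Fgain at he2 he3
  rw [sub_eq_zero, div_pow, div_eq_div_iff (by positivity) (by positivity)] at he2 he3
  -- polynomial equation for T₂ : 4 a^6 + 6 a^4 - 1 = 0, factor out (2a²+1)
  have p2 : 2 * T₂ ^ 4 + 2 * T₂ ^ 2 - 1 = 0 := by
    have h : (2 * T₂ ^ 4 + 2 * T₂ ^ 2 - 1) * (2 * T₂ ^ 2 + 1) = 0 := by ring_nf; nlinarith [he2]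
    have h' : (2 : ℝ) * T₂ ^ 2 + 1 > 0 := by positivity
    rcases mul_eq_zero.mp h with h | h
    · exact h
    · linarith
  have p3 : 3 * T₃ ^ 10 + 2 * T₃ ^ 9 + 9 * T₃ ^ 8 + 6 * T₃ ^ 7 + 6 * T₃ ^ 6 + 6 * T₃ ^ 5
      - 3 * T₃ ^ 4 + 2 * T₃ ^ 3 - 3 * T₃ ^ 2 - 1 = 0 := by nlinarith [he3]
  refine ⟨?_, ?_, ?_, ?_, ?_, ?_⟩
  · nlinarith [sq_nonneg (T₁ - 0.42), sq_nonneg T₁]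
  · nlinarith [sq_nonneg (T₁ - 0.43), sq_nonneg T₁]
  · nlinarith [sq_nonneg (T₂ - 0.60), sq_nonneg (T₂ + 0.60), sq_nonneg T₂]
  · nlinarith [sq_nonneg (T₂ - 0.61), sq_nonneg (T₂ + 0.61), sq_nonneg T₂]
  · -- 0.67 < T₃ : P(a) < 0 on (0, 0.67]
    by_contra hc
    push_neg at hc
    have hle : T₃ ≤ 67/100 := by norm_num at hc ⊢; linarith
    have hsq : (0:ℝ) ≤ T₃ ^ 2 := sq_nonneg T₃
    have m3 : T₃ ^ 3 ≤ (67/100) ^ 1 * T₃ ^ 2 := by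
      calc T₃ ^ 3 = T₃ ^ 1 * T₃ ^ 2 := by ring
        _ ≤ (67/100) ^ 1 * T₃ ^ 2 :=
          mul_le_mul_of_nonneg_right (pow_le_pow_left₀ hp3.le hle 1) hsq
    have m5 : T₃ ^ 5 ≤ (67/100) ^ 3 * T₃ ^ 2 := by
      calc T₃ ^ 5 = T₃ ^ 3 * T₃ ^ 2 := by ring
        _ ≤ (67/100) ^ 3 * T₃ ^ 2 :=
          mul_le_mul_of_nonneg_right (pow_le_pow_left₀ hp3.le hle 3) hsq
    have m6 : T₃ ^ 6 ≤ (67/100) ^ 4 * T₃ ^ 2 := by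
      calc T₃ ^ 6 = T₃ ^ 4 * T₃ ^ 2 := by ring
        _ ≤ (67/100) ^ 4 * T₃ ^ 2 :=
          mul_le_mul_of_nonneg_right (pow_le_pow_left₀ hp3.le hle 4) hsq
    have m7 : T₃ ^ 7 ≤ (67/100) ^ 5 * T₃ ^ 2 := by
      calc T₃ ^ 7 = T₃ ^ 5 * T₃ ^ 2 := by ring
        _ ≤ (67/100) ^ 5 * T₃ ^ 2 :=
          mul_le_mul_of_nonneg_right (pow_le_pow_left₀ hp3.le hle 5) hsq
    have m8 : T₃ ^ 8 ≤ (67/100) ^ 6 * T₃ ^ 2 := by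
      calc T₃ ^ 8 = T₃ ^ 6 * T₃ ^ 2 := by ring
        _ ≤ (67/100) ^ 6 * T₃ ^ 2 :=
          mul_le_mul_of_nonneg_right (pow_le_pow_left₀ hp3.le hle 6) hsq
    have m9 : T₃ ^ 9 ≤ (67/100) ^ 7 * T₃ ^ 2 := by
      calc T₃ ^ 9 = T₃ ^ 7 * T₃ ^ 2 := by ring
        _ ≤ (67/100) ^ 7 * T₃ ^ 2 :=
          mul_le_mul_of_nonneg_right (pow_le_pow_left₀ hp3.le hle 7) hsq
    have m10 : T₃ ^ 10 ≤ (67/100) ^ 8 * T₃ ^ 2 := by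
      calc T₃ ^ 10 = T₃ ^ 8 * T₃ ^ 2 := by ring
        _ ≤ (67/100) ^ 8 * T₃ ^ 2 :=
          mul_le_mul_of_nonneg_right (pow_le_pow_left₀ hp3.le hle 8) hsq
    have hT2 : T₃ ^ 2 ≤ (67/100) ^ 2 := pow_le_pow_left₀ hp3.le hle 2
    have h4 : (32208802990944523/10000000000000000 : ℝ) * T₃ ^ 2 - 3 * T₃ ^ 4 ≤
        84131953626349963747/100000000000000000000 := by
      have prod : (0:ℝ) ≤ ((67/100 : ℝ) ^ 2 - T₃ ^ 2) *
          (32208802990944523/10000000000000000 - 3 * (67/100 : ℝ) ^ 2 - 3 * T₃ ^ 2) := by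
        apply mul_nonneg
        · linarith [hT2]
        · nlinarith [hT2]
      have expand : ((67/100 : ℝ) ^ 2 - T₃ ^ 2) *
          (32208802990944523/10000000000000000 - 3 * (67/100 : ℝ) ^ 2 - 3 * T₃ ^ 2) =
          84131953626349963747/100000000000000000000 -
          (32208802990944523/10000000000000000 * T₃ ^ 2 - 3 * T₃ ^ 4) := by ring
      linarith [expand ▸ prod]
    have e1 : ((67:ℝ)/100) ^ 1 = 67/100 := by norm_num
    have e3 : ((67:ℝ)/100) ^ 3 = 300763/1000000 := by norm_num
    have e4 : ((67:ℝ)/100) ^ 4 = 20151121/100000000 := by norm_num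
    have e5 : ((67:ℝ)/100) ^ 5 = 1350125107/10000000000 := by norm_num
    have e6 : ((67:ℝ)/100) ^ 6 = 90458382169/1000000000000 := by norm_num
    have e7 : ((67:ℝ)/100) ^ 7 = 6060711605323/100000000000000 := by norm_num
    have e8 : ((67:ℝ)/100) ^ 8 = 406067677556641/10000000000000000 := by norm_num
    rw [e1] at m3; rw [e3] at m5; rw [e4] at m6; rw [e5] at m7
    rw [e6] at m8; rw [e7] at m9; rw [e8] at m10
    linarith [p3, m3, m5, m6, m7, m8, m9, m10, h4]
  · -- T₃ < 0.69 : P(a) > 0 for a ≥ 0.69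
    by_contra hc
    push_neg at hc
    have hge : (0:ℝ) ≤ T₃ - 69/100 := by norm_num at hc ⊢; linarith
    have key : 3 * T₃ ^ 10 + 2 * T₃ ^ 9 + 9 * T₃ ^ 8 + 6 * T₃ ^ 7 + 6 * T₃ ^ 6 + 6 * T₃ ^ 5
        - 3 * T₃ ^ 4 + 2 * T₃ ^ 3 - 3 * T₃ ^ 2 - 1 =
        (18812188751791215203/100000000000000000000)
        + (1908747805670492067/100000000000000000) * (T₃ - 69/100) ^ 1
        + (183761946780925467/2000000000000000) * (T₃ - 69/100) ^ 2
        + (582680842991321/2500000000000) * (T₃ - 69/100) ^ 3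
        + (37974078503583/100000000000) * (T₃ - 69/100) ^ 4
        + (1079397627261/2500000000) * (T₃ - 69/100) ^ 5
        + (3529495743/10000000) * (T₃ - 69/100) ^ 6
        + (5205561/25000) * (T₃ - 69/100) ^ 7
        + (171387/2000) * (T₃ - 69/100) ^ 8
        + (227/10) * (T₃ - 69/100) ^ 9
        + (3/1) * (T₃ - 69/100) ^ 10 := by ring
    have pos : ∀ n : ℕ, (0:ℝ) ≤ (T₃ - 69/100) ^ n := fun n => pow_nonneg hge n
    linarith [p3, key ▸ p3, pos 1, pos 2, pos 3, pos 4, pos 5, pos 6, pos 7, pos 8, pos 9, pos 10]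
end

section
/- There exist h > 0, u > 0, and an integer k ≥ 3 such that G(h,u,k) := (1+h^k)^2/(1+h^2+u)^k − 1/(1+h^2+u)^k − (h^2/(h^2+u))^k > 0. In particular this holds for suitable (h,u,k), disproving that the left side is always nonpositive. -/
/-- Local Hermite-perturbation gain for the strong Shamai–Laroia conjecture,
at inverse SNR `u`. -/
noncomputable def Ggain (h u : ℝ) (k : ℕ) : ℝ :=
  (1 + h ^ k) ^ 2 / (1 + h ^ 2 + u) ^ k - 1 / (1 + h ^ 2 + u) ^ k
    - (h ^ 2 / (h ^ 2 + u)) ^ k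

/-- There exist `h > 0`, `u > 0` and `k ≥ 3` with `G(h,u,k) > 0`,
disproving the strong Shamai–Laroia conjecture. -/
theorem exists_Ggain_pos :
    ∃ (h u : ℝ) (k : ℕ), 0 < h ∧ 0 < u ∧ 3 ≤ k ∧ 0 < Ggain h u k := by
  refine ⟨1/2, 1, 3, by norm_num, by norm_num, le_refl 3, ?_⟩
  unfold Ggain
  norm_num
end

section
/- Let p, v > 0, let L be a polynomial with ∫ L g_p = 0 and inf L > −∞, and set f_ε = g_p(1 + εL). Then D(f_ε ⋆ g_v ‖ g_{p+v}) = (ε²/2) · ‖((g_p L) ⋆ g_v)/g_{p+v}‖²_{L²(g_{p+v})} + o(ε²) as ε → 0⁺. -/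
open MeasureTheory Real

lemma gauss_eq_exp (p : ℝ) (x : ℝ) :
    gauss p x = (Real.sqrt (2 * Real.pi * p))⁻¹ * Real.exp (-((2*p)⁻¹) * x ^ 2) := by
  unfold gauss; ring_nf

lemma integrable_gauss {p : ℝ} (hp : 0 < p) : Integrable (gauss p) := by
  have h : (0:ℝ) < (2*p)⁻¹ := by positivity
  have := (integrable_exp_neg_mul_sq h).const_mul (Real.sqrt (2 * Real.pi * p))⁻¹
  refine this.congr ?_
  filter_upwards with x
  rw [gauss_eq_exp]

lemma integral_gauss {p : ℝ} (hp : 0 < p) : ∫ x, gauss p x = 1 := by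
  simp only [gauss_eq_exp]
  rw [integral_const_mul, integral_gaussian]
  have h2 : Real.pi / (2*p)⁻¹ = 2 * Real.pi * p := by field_simp
  rw [h2, inv_mul_cancel₀]
  positivity

lemma gauss_mul {p v : ℝ} (hp : 0 < p) (hv : 0 < v) (x t : ℝ) :
    gauss p t * gauss v (x - t)
      = gauss (p + v) x * gauss (p * v / (p + v)) (t - p / (p + v) * x) := by
  have hpv : 0 < p + v := by linarith
  have hw : 0 < p * v / (p + v) := by positivity
  unfold gauss
  rw [mul_mul_mul_comm, mul_mul_mul_comm ((Real.sqrt (2 * Real.pi * (p+v)))⁻¹)]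
  congr 1
  · rw [← mul_inv, ← mul_inv, ← Real.sqrt_mul (by positivity), ← Real.sqrt_mul (by positivity)]
    congr 2
    field_simp
  · rw [← Real.exp_add, ← Real.exp_add]
    congr 1
    field_simp
    ring





lemma integrable_pow_mul_gauss {p : ℝ} (hp : 0 < p) (n : ℕ) :
    Integrable (fun x : ℝ => x ^ n * gauss p x) := by
  have hb4 : (0:ℝ) < (4*p)⁻¹ := by positivity
  set C : ℝ := 1 + n.factorial * (4*p) ^ n with hC
  have hI : Integrable (fun x : ℝ => (Real.sqrt (2 * Real.pi * p))⁻¹ *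
      (C * Real.exp (-(4*p)⁻¹ * x ^ 2))) :=
    ((integrable_exp_neg_mul_sq hb4).const_mul C).const_mul _
  refine hI.mono' ?_ ?_
  · exact ((continuous_pow n).mul (gauss_continuous p)).aestronglyMeasurable
  · filter_upwards with x
    have hc : (0:ℝ) ≤ (Real.sqrt (2 * Real.pi * p))⁻¹ := by positivity
    rw [Real.norm_eq_abs, abs_mul, abs_pow, ← Real.norm_eq_abs (gauss p x), Real.norm_eq_abs]
    have hg : |gauss p x| = (Real.sqrt (2 * Real.pi * p))⁻¹ * Real.exp (-(x ^ 2) / (2*p)) := by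
      rw [abs_of_nonneg ?_]; · rfl
      · unfold gauss; positivity
    rw [hg]
    have key : |x| ^ n * Real.exp (-(x ^ 2) / (2*p)) ≤ C * Real.exp (-(4*p)⁻¹ * x ^ 2) := by
      have habs : |x| ^ n ≤ 1 + x ^ (2*n) := by
        rcases le_total (|x|) 1 with h|h
        · have : |x| ^ n ≤ 1 := pow_le_one₀ (abs_nonneg x) h
          have h2 : (0:ℝ) ≤ x ^ (2*n) := by rw [pow_mul]; positivity
          linarith
        · have h1 : |x| ^ n ≤ |x| ^ (2*n) := pow_le_pow_right₀ h (by omega)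
          have h2 : |x| ^ (2*n) = x ^ (2*n) := by
            rw [pow_mul, pow_mul, sq_abs]
          linarith [h1, h2.le]
      have hxpow : x ^ (2*n) ≤ n.factorial * (4*p) ^ n * Real.exp ((4*p)⁻¹ * x ^ 2) := by
        have h := Real.pow_div_factorial_le_exp (x := (4*p)⁻¹ * x ^ 2) (by positivity) n
        have e : ((4*p)⁻¹ * x ^ 2) ^ n = x ^ (2*n) / (4*p) ^ n := by
          rw [mul_pow, ← pow_mul]
          rw [inv_pow, inv_mul_eq_div]
        rw [e, div_div] at h
        have h4 : (0:ℝ) < (4*p) ^ n := by positivity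
        rw [div_le_iff₀ (by positivity)] at h
        calc x ^ (2*n) ≤ Real.exp ((4*p)⁻¹ * x ^ 2) * ((4*p) ^ n * n.factorial) := h
          _ = n.factorial * (4*p) ^ n * Real.exp ((4*p)⁻¹ * x ^ 2) := by ring
      have hexple : Real.exp (-(x ^ 2) / (2*p)) ≤ Real.exp (-(4*p)⁻¹ * x ^ 2) := by
        rw [Real.exp_le_exp]
        rw [div_le_iff₀ (by positivity : (0:ℝ) < 2*p)] at *
        have : -(4*p)⁻¹ * x ^ 2 * (2*p) = -(x^2)/2 := by field_simp; ring
        rw [this]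
        nlinarith [sq_nonneg x]
      have hcomb : x ^ (2*n) * Real.exp (-(x ^ 2) / (2*p))
          ≤ n.factorial * (4*p) ^ n * Real.exp (-(4*p)⁻¹ * x ^ 2) := by
        calc x ^ (2*n) * Real.exp (-(x ^ 2) / (2*p))
            ≤ (n.factorial * (4*p) ^ n * Real.exp ((4*p)⁻¹ * x ^ 2)) *
                Real.exp (-(x ^ 2) / (2*p)) := by
              exact mul_le_mul_of_nonneg_right hxpow (Real.exp_pos _).le
          _ = n.factorial * (4*p) ^ n * Real.exp ((4*p)⁻¹ * x ^ 2 + -(x ^ 2) / (2*p)) := by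
              rw [Real.exp_add]; ring
          _ = n.factorial * (4*p) ^ n * Real.exp (-(4*p)⁻¹ * x ^ 2) := by
              congr 2
              field_simp
              ring
      have hfac : (0:ℝ) ≤ (n.factorial : ℝ) * (4*p) ^ n := by positivity
      calc |x| ^ n * Real.exp (-(x ^ 2) / (2*p))
          ≤ (1 + x ^ (2*n)) * Real.exp (-(x ^ 2) / (2*p)) :=
            mul_le_mul_of_nonneg_right habs (Real.exp_pos _).le
        _ = Real.exp (-(x ^ 2) / (2*p)) + x ^ (2*n) * Real.exp (-(x ^ 2) / (2*p)) := by ring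
        _ ≤ Real.exp (-(4*p)⁻¹ * x ^ 2)
            + n.factorial * (4*p) ^ n * Real.exp (-(4*p)⁻¹ * x ^ 2) :=
            add_le_add hexple hcomb
        _ = C * Real.exp (-(4*p)⁻¹ * x ^ 2) := by rw [hC]; ring
    calc |x| ^ n * ((Real.sqrt (2 * Real.pi * p))⁻¹ * Real.exp (-(x ^ 2) / (2*p)))
        = (Real.sqrt (2 * Real.pi * p))⁻¹ * (|x| ^ n * Real.exp (-(x ^ 2) / (2*p))) := by ring
      _ ≤ (Real.sqrt (2 * Real.pi * p))⁻¹ * (C * Real.exp (-(4*p)⁻¹ * x ^ 2)) :=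
          mul_le_mul_of_nonneg_left key hc

lemma integrable_poly_mul_gauss {p : ℝ} (hp : 0 < p) (P : Polynomial ℝ) :
    Integrable (fun x : ℝ => P.eval x * gauss p x) := by
  have h : ∀ x : ℝ, P.eval x * gauss p x
      = ∑ i ∈ Finset.range (P.natDegree + 1), P.coeff i * (x ^ i * gauss p x) := by
    intro x
    rw [Polynomial.eval_eq_sum_range, Finset.sum_mul]
    exact Finset.sum_congr rfl fun i _ => by ring
  have hs : Integrable (fun x : ℝ => ∑ i ∈ Finset.range (P.natDegree + 1),
      P.coeff i * (x ^ i * gauss p x)) :=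
    integrable_finset_sum _ fun i _ => (integrable_pow_mul_gauss hp i).const_mul (P.coeff i)
  refine hs.congr ?_
  filter_upwards with x; exact (h x).symm

lemma integrable_one_add_sq_pow_mul_gauss {p : ℝ} (hp : 0 < p) (n : ℕ) :
    Integrable (fun x : ℝ => (1 + x ^ 2) ^ n * gauss p x) := by
  have := integrable_poly_mul_gauss hp ((1 + Polynomial.X ^ 2) ^ n)
  refine this.congr ?_
  filter_upwards with x
  simp

lemma poly_abs_bound (P : Polynomial ℝ) :
    ∃ C : ℝ, 0 ≤ C ∧ ∀ t : ℝ, |P.eval t| ≤ C * (1 + t ^ 2) ^ P.natDegree := by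
  refine ⟨∑ i ∈ Finset.range (P.natDegree + 1), |P.coeff i|,
    Finset.sum_nonneg fun i _ => abs_nonneg _, fun t => ?_⟩
  have h1 : 1 ≤ 1 + t ^ 2 := by nlinarith [sq_nonneg t]
  rw [Polynomial.eval_eq_sum_range]
  calc |∑ i ∈ Finset.range (P.natDegree + 1), P.coeff i * t ^ i|
      ≤ ∑ i ∈ Finset.range (P.natDegree + 1), |P.coeff i * t ^ i| :=
        Finset.abs_sum_le_sum_abs _ _
    _ ≤ ∑ i ∈ Finset.range (P.natDegree + 1), |P.coeff i| * (1 + t ^ 2) ^ P.natDegree := by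
        refine Finset.sum_le_sum fun i hi => ?_
        rw [abs_mul]
        refine mul_le_mul_of_nonneg_left ?_ (abs_nonneg _)
        calc |t ^ i| = |t| ^ i := abs_pow t i
          _ ≤ (1 + t ^ 2) ^ i := by
              refine pow_le_pow_left₀ (abs_nonneg t) ?_ i
              nlinarith [sq_nonneg (|t| - 1), sq_abs t]
          _ ≤ (1 + t ^ 2) ^ P.natDegree := by
              refine pow_le_pow_right₀ h1 ?_
              exact Nat.lt_succ_iff.mp (Finset.mem_range.mp hi)
    _ = (∑ i ∈ Finset.range (P.natDegree + 1), |P.coeff i|) * (1 + t ^ 2) ^ P.natDegree :=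
        (Finset.sum_mul _ _ _).symm

lemma abs_psi_le {u : ℝ} (hu : -(1/2) ≤ u) :
    |(1 + u) * Real.log (1 + u) - u - u ^ 2 / 2| ≤ 5 * |u| ^ 3 := by
  rcases le_or_gt u (1/2) with h | h
  · -- |u| ≤ 1/2 : use the power series bound for log
    have habs : |u| ≤ 1/2 := abs_le.2 ⟨by linarith, h⟩
    have h1 : |u| < 1 := lt_of_le_of_lt habs (by norm_num)
    have hx : |(-u)| < 1 := by rwa [abs_neg]
    have hlog := Real.abs_log_sub_add_sum_range_le hx 2
    rw [abs_neg] at hlog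
    have hsum : (∑ i ∈ Finset.range 2, (-u) ^ (i + 1) / (i + 1)) = -u + u^2/2 := by
      simp [Finset.sum_range_succ]
      ring
    rw [hsum] at hlog
    have hden : (1:ℝ)/2 ≤ 1 - |u| := by linarith
    have hR : |Real.log (1 + u) - u + u^2/2| ≤ 2 * |u|^3 := by
      have h2 : |u| ^ 3 / (1 - |u|) ≤ 2 * |u| ^ 3 := by
        rw [div_le_iff₀ (by linarith : (0:ℝ) < 1 - |u|)]
        nlinarith [pow_nonneg (abs_nonneg u) 3]
      have : -u + u ^ 2 / 2 + Real.log (1 - -u) = Real.log (1 + u) - u + u^2/2 := by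
        rw [sub_neg_eq_add]; ring
      rw [this] at hlog
      exact hlog.trans h2
    have hkey : (1 + u) * Real.log (1 + u) - u - u ^ 2 / 2
        = (1 + u) * (Real.log (1 + u) - u + u^2/2) - u^3/2 - u^3 * u / 2 + u^3*u/2 := by
      ring
    have h1u : |1 + u| ≤ 3/2 := by
      rw [abs_le]; constructor <;> nlinarith [abs_le.1 habs]
    calc |(1 + u) * Real.log (1 + u) - u - u ^ 2 / 2|
        = |(1 + u) * (Real.log (1 + u) - u + u^2/2) - u^3/2| := by rw [hkey]; ring_nf
      _ ≤ |(1 + u) * (Real.log (1 + u) - u + u^2/2)| + |u^3/2| := abs_sub _ _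
      _ = |1 + u| * |Real.log (1 + u) - u + u^2/2| + |u|^3/2 := by
          rw [abs_mul, abs_div, abs_pow]; norm_num
      _ ≤ (3/2) * (2 * |u|^3) + |u|^3/2 := by
          gcongr
      _ ≤ 5 * |u| ^ 3 := by nlinarith [pow_nonneg (abs_nonneg u) 3]
  · -- u > 1/2
    have hu0 : (0:ℝ) < u := by linarith
    have h1u : (0:ℝ) < 1 + u := by linarith
    have hlog_le : Real.log (1 + u) ≤ u := by
      have := Real.log_le_sub_one_of_pos h1u
      linarith
    have hlog_nonneg : 0 ≤ Real.log (1 + u) := Real.log_nonneg (by linarith)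
    have hup : (1 + u) * Real.log (1 + u) - u - u ^ 2 / 2 ≤ u^2/2 := by
      have : (1 + u) * Real.log (1 + u) ≤ (1 + u) * u :=
        mul_le_mul_of_nonneg_left hlog_le (by linarith)
      nlinarith
    have hdown : -(u + u^2/2) ≤ (1 + u) * Real.log (1 + u) - u - u ^ 2 / 2 := by
      nlinarith [mul_nonneg h1u.le hlog_nonneg]
    have habs : |u| = u := abs_of_pos hu0
    rw [habs, abs_le]
    constructor <;> nlinarith

lemma integrable_gauss_shift {w : ℝ} (hw : 0 < w) (a : ℝ) :
    Integrable (fun t : ℝ => gauss w (t - a)) :=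
  (integrable_gauss hw).comp_sub_right a

lemma integral_gauss_shift {w : ℝ} (hw : 0 < w) (a : ℝ) :
    ∫ t, gauss w (t - a) = 1 := by
  rw [integral_sub_right_eq_self (gauss w) a]
  exact integral_gauss hw

lemma integrable_poly_mul_gauss_shift {w : ℝ} (hw : 0 < w) (P : Polynomial ℝ) (a : ℝ) :
    Integrable (fun t : ℝ => P.eval t * gauss w (t - a)) := by
  have h := (integrable_poly_mul_gauss hw (P.comp (Polynomial.X + Polynomial.C a))).comp_sub_right a
  refine h.congr ?_
  filter_upwards with t
  simp [Polynomial.eval_comp]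

lemma gauss_conv_s15 {p v : ℝ} (hp : 0 < p) (hv : 0 < v) (x : ℝ) :
    ∫ t, gauss p t * gauss v (x - t) = gauss (p + v) x := by
  have hpv : 0 < p + v := by linarith
  have hw : 0 < p * v / (p + v) := by positivity
  rw [integral_congr_ae (ae_of_all _ (gauss_mul hp hv x)), integral_const_mul,
    integral_gauss_shift hw, mul_one]

noncomputable def psiFn (u : ℝ) : ℝ := (1 + u) * Real.log (1 + u) - u - u ^ 2 / 2

lemma abs_psiFn_le {u : ℝ} (hu : -(1/2) ≤ u) : |psiFn u| ≤ 5 * |u| ^ 3 := abs_psi_le hu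

set_option maxHeartbeats 2000000 in
/-- Second-order expansion of the output divergence: with `f_ε = g_p(1+εL)`,
`D(f_ε ⋆ g_v ‖ g_{p+v}) = (ε²/2) ‖((g_p L) ⋆ g_v)/g_{p+v}‖²_{L²(g_{p+v})} + o(ε²)`
as `ε → 0⁺`. -/
theorem kl_second_order_output (p v : ℝ) (hp : 0 < p) (hv : 0 < v) (L : ℝ → ℝ)
    (hpoly : ∃ P : Polynomial ℝ, ∀ x, L x = P.eval x)
    (hbdd : BddBelow (Set.range L))
    (hmean : ∫ x, L x * gauss p x = 0) :
    Filter.Tendsto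
      (fun ε : ℝ =>
        ((∫ x, (∫ t, gauss p t * (1 + ε * L t) * gauss v (x - t)) *
            Real.log ((∫ t, gauss p t * (1 + ε * L t) * gauss v (x - t))
              / gauss (p + v) x))
          - ε ^ 2 / 2 *
            ∫ x, ((∫ t, gauss p t * L t * gauss v (x - t)) / gauss (p + v) x) ^ 2
              * gauss (p + v) x) / ε ^ 2)
      (nhdsWithin 0 (Set.Ioi 0)) (nhds 0) := by
  obtain ⟨P, hP⟩ := hpoly
  obtain ⟨C, hC0, hCb⟩ := poly_abs_bound P
  have hCbL : ∀ t : ℝ, |L t| ≤ C * (1 + t ^ 2) ^ P.natDegree := fun t => (hP t) ▸ hCb t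
  set d := P.natDegree with hd
  obtain ⟨m, hm⟩ := hbdd
  have hLm : ∀ t, m ≤ L t := fun t => hm ⟨t, rfl⟩
  set M : ℝ := max 1 (-m) with hMdef
  have hM1 : (1:ℝ) ≤ M := le_max_left _ _
  have hM0 : (0:ℝ) < M := lt_of_lt_of_le one_pos hM1
  have hLM : ∀ t, -M ≤ L t := fun t => le_trans (by simp [hMdef]; linarith [le_max_right (1:ℝ) (-m)]) (hLm t)
  have hpv : 0 < p + v := by linarith
  set w : ℝ := p * v / (p + v) with hwdef
  have hw : 0 < w := by positivity
  set c : ℝ := p / (p + v) with hcdef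
  set g : ℝ → ℝ := gauss (p + v) with hgdef
  have hg_pos : ∀ x, 0 < g x := fun x => gauss_pos hpv x
  have hL_cont : Continuous L := (P.continuous_aeval).congr fun x => by
    simp only [Polynomial.coe_aeval_eq_eval]
    exact (hP x).symm
  -- the normalized perturbation r
  set r : ℝ → ℝ := fun x => ∫ t, L t * gauss w (t - c * x) with hrdef
  -- integrability of the base convolution integrand
  have Ia : ∀ x : ℝ, Integrable (fun t => gauss p t * gauss v (x - t)) := by
    intro x
    refine (((integrable_gauss hw).comp_sub_right (c * x)).const_mul (g x)).congr ?_
    filter_upwards with t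
    rw [gauss_mul hp hv x t]
  have Ibase : ∀ x : ℝ, Integrable (fun t => L t * gauss w (t - c * x)) := by
    intro x
    refine (integrable_poly_mul_gauss_shift hw P (c * x)).congr ?_
    filter_upwards with t
    rw [hP t]
  have Ib : ∀ x : ℝ, Integrable (fun t => gauss p t * L t * gauss v (x - t)) := by
    intro x
    refine ((Ibase x).const_mul (g x)).congr ?_
    filter_upwards with t
    calc g x * (L t * gauss w (t - c * x)) = L t * (gauss p t * gauss v (x - t)) := by
          rw [gauss_mul hp hv x t]; ring
      _ = gauss p t * L t * gauss v (x - t) := by ring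
  -- pointwise rewriting of the perturbation integral
  have hA_eq : ∀ x : ℝ, (∫ t, gauss p t * L t * gauss v (x - t)) = g x * r x := by
    intro x
    have h1 : ∀ t : ℝ, gauss p t * L t * gauss v (x - t) = g x * (L t * gauss w (t - c * x)) := by
      intro t
      rw [show gauss p t * L t * gauss v (x - t) = L t * (gauss p t * gauss v (x - t)) by ring,
        gauss_mul hp hv x t]
      ring
    rw [integral_congr_ae (ae_of_all _ h1), integral_const_mul]
  -- lower bound on r
  have hr_lower : ∀ x : ℝ, -M ≤ r x := by
    intro x
    have h1 : Integrable (fun t : ℝ => -M * gauss w (t - c * x)) :=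
      (integrable_gauss_shift hw (c * x)).const_mul _
    have h2 : ∀ t : ℝ, -M * gauss w (t - c * x) ≤ L t * gauss w (t - c * x) := fun t =>
      mul_le_mul_of_nonneg_right (hLM t) (gauss_pos hw _).le
    have h3 := integral_mono h1 (Ibase x) h2
    rwa [integral_const_mul, integral_gauss_shift hw, mul_one] at h3
  -- moment constant
  set m3 : ℝ := ∫ s, (1 + s ^ 2) ^ d * gauss w s with hm3def
  have hm3_nonneg : 0 ≤ m3 :=
    integral_nonneg fun s => mul_nonneg (by positivity) (gauss_pos hw s).le
  -- the key upper bound chain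
  set K : ℝ := C * 2 ^ d * (1 + c ^ 2) ^ d * m3 with hKdef
  set B : ℝ → ℝ := fun x => K * (1 + x ^ 2) ^ d with hBdef
  have hK0 : 0 ≤ K := by
    refine mul_nonneg (mul_nonneg (mul_nonneg hC0 (by positivity)) (by positivity)) hm3_nonneg
  have hB0 : ∀ x, 0 ≤ B x := fun x => by
    have : (0:ℝ) ≤ (1 + x ^ 2) ^ d := by positivity
    exact mul_nonneg hK0 this
  have hchain : ∀ x : ℝ, (∫ t, |L t| * gauss w (t - c * x)) ≤ B x := by
    intro x
    have hIP : Integrable (fun t : ℝ => C * (1 + t ^ 2) ^ d * gauss w (t - c * x)) := by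
      refine (integrable_poly_mul_gauss_shift hw (Polynomial.C C * (1 + Polynomial.X ^ 2) ^ d) (c * x)).congr ?_
      filter_upwards with t
      simp [mul_comm]
    have hIabs : Integrable (fun t : ℝ => |L t| * gauss w (t - c * x)) := by
      refine hIP.mono' ?_ ?_
      · exact (hL_cont.abs.mul ((gauss_continuous w).comp (continuous_id.sub continuous_const))).aestronglyMeasurable
      · filter_upwards with t
        rw [Real.norm_eq_abs, abs_of_nonneg (mul_nonneg (abs_nonneg _) (gauss_pos hw _).le)]
        exact mul_le_mul_of_nonneg_right (hCbL t) (gauss_pos hw _).le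
    have step1 : (∫ t, |L t| * gauss w (t - c * x)) ≤ ∫ t, C * (1 + t ^ 2) ^ d * gauss w (t - c * x) := by
      refine integral_mono hIabs hIP fun t => ?_
      exact mul_le_mul_of_nonneg_right (hCbL t) (gauss_pos hw _).le
    have hpt : ∀ t : ℝ, C * (1 + t ^ 2) ^ d * gauss w (t - c * x)
        ≤ (C * 2 ^ d * (1 + (c*x) ^ 2) ^ d) * ((1 + (t - c*x) ^ 2) ^ d * gauss w (t - c * x)) := by
      intro t
      have hsq : (1 + t ^ 2) ^ d ≤ 2 ^ d * (1 + (t - c*x) ^ 2) ^ d * (1 + (c*x) ^ 2) ^ d := by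
        have base : 1 + t ^ 2 ≤ 2 * (1 + (t - c*x) ^ 2) * (1 + (c*x) ^ 2) := by nlinarith [sq_nonneg (t - c*x), sq_nonneg (c*x), sq_nonneg ((t-c*x)*(c*x)), sq_nonneg (t - c*x - c*x), sq_nonneg (t-c*x+c*x)]
        calc (1 + t ^ 2) ^ d ≤ (2 * (1 + (t - c*x) ^ 2) * (1 + (c*x) ^ 2)) ^ d :=
              pow_le_pow_left₀ (by positivity) base d
          _ = 2 ^ d * (1 + (t - c*x) ^ 2) ^ d * (1 + (c*x) ^ 2) ^ d := by
              rw [mul_pow, mul_pow]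
      calc C * (1 + t ^ 2) ^ d * gauss w (t - c * x)
          ≤ C * (2 ^ d * (1 + (t - c*x) ^ 2) ^ d * (1 + (c*x) ^ 2) ^ d) * gauss w (t - c * x) := by
            refine mul_le_mul_of_nonneg_right (mul_le_mul_of_nonneg_left hsq hC0) (gauss_pos hw _).le
        _ = (C * 2 ^ d * (1 + (c*x) ^ 2) ^ d) * ((1 + (t - c*x) ^ 2) ^ d * gauss w (t - c * x)) := by
            ring
    have hIP2 : Integrable (fun t : ℝ => (1 + (t - c*x) ^ 2) ^ d * gauss w (t - c * x)) := by
      have := (integrable_poly_mul_gauss hw ((1 + Polynomial.X ^ 2) ^ d)).comp_sub_right (c * x)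
      refine this.congr ?_
      filter_upwards with t
      simp
    have step2 : (∫ t, C * (1 + t ^ 2) ^ d * gauss w (t - c * x))
        ≤ (C * 2 ^ d * (1 + (c*x) ^ 2) ^ d) * ∫ t, (1 + (t - c*x) ^ 2) ^ d * gauss w (t - c * x) := by
      rw [← integral_const_mul]
      exact integral_mono hIP (hIP2.const_mul _) hpt
    have hshift : (∫ t, (1 + (t - c*x) ^ 2) ^ d * gauss w (t - c * x)) = m3 := by
      rw [hm3def]
      exact integral_sub_right_eq_self (fun s => (1 + s ^ 2) ^ d * gauss w s) (c * x)
    have hcx : (1 + (c*x) ^ 2) ^ d ≤ (1 + c ^ 2) ^ d * (1 + x ^ 2) ^ d := by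
      rw [← mul_pow]
      refine pow_le_pow_left₀ (by positivity) (by nlinarith [sq_nonneg c, sq_nonneg x, sq_nonneg (c*x)]) d
    calc (∫ t, |L t| * gauss w (t - c * x))
        ≤ ∫ t, C * (1 + t ^ 2) ^ d * gauss w (t - c * x) := step1
      _ ≤ (C * 2 ^ d * (1 + (c*x) ^ 2) ^ d) * ∫ t, (1 + (t - c*x) ^ 2) ^ d * gauss w (t - c * x) := step2
      _ = (C * 2 ^ d * (1 + (c*x) ^ 2) ^ d) * m3 := by rw [hshift]
      _ ≤ B x := by
          rw [hBdef, hKdef]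
          have h1 : C * 2 ^ d * (1 + (c*x) ^ 2) ^ d ≤ C * 2 ^ d * ((1 + c ^ 2) ^ d * (1 + x ^ 2) ^ d) :=
            mul_le_mul_of_nonneg_left hcx (by positivity)
          calc (C * 2 ^ d * (1 + (c*x) ^ 2) ^ d) * m3
              ≤ (C * 2 ^ d * ((1 + c ^ 2) ^ d * (1 + x ^ 2) ^ d)) * m3 :=
                mul_le_mul_of_nonneg_right h1 hm3_nonneg
            _ = C * 2 ^ d * (1 + c ^ 2) ^ d * m3 * (1 + x ^ 2) ^ d := by ring
  -- bound on |r|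
  have hrB : ∀ x : ℝ, |r x| ≤ B x := by
    intro x
    have h1 : |r x| ≤ ∫ t, |L t| * |gauss w (t - c * x)| := by
      rw [hrdef]
      simpa using norm_integral_le_integral_norm (μ := volume) fun t => L t * gauss w (t - c * x)
    have h2 : ∀ t : ℝ, |L t| * |gauss w (t - c * x)| = |L t| * gauss w (t - c * x) := fun t => by
      rw [abs_of_nonneg (gauss_pos hw _).le]
    rw [integral_congr_ae (ae_of_all _ h2)] at h1
    exact h1.trans (hchain x)
  -- measurability of r
  have hr_meas : StronglyMeasurable r := by
    have hcont : Continuous (fun q : ℝ × ℝ => L q.2 * gauss w (q.2 - c * q.1)) := by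
      exact (hL_cont.comp continuous_snd).mul
        ((gauss_continuous w).comp (continuous_snd.sub (continuous_const.mul continuous_fst)))
    exact hcont.stronglyMeasurable.integral_prod_right'
  -- integrability of g * B^k
  have hg_cont : Continuous g := gauss_continuous _
  have IgB : ∀ k : ℕ, Integrable (fun x => g x * B x ^ k) := by
    intro k
    have h := (integrable_one_add_sq_pow_mul_gauss hpv (d * k)).const_mul (K ^ k)
    refine h.congr ?_
    filter_upwards with x
    simp only [hBdef, hgdef]
    rw [pow_mul, mul_pow]
    ring
  have Igr : Integrable (fun x => g x * r x) := by
    refine (IgB 1).mono' (hg_cont.aestronglyMeasurable.mul hr_meas.aestronglyMeasurable) ?_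
    filter_upwards with x
    rw [Real.norm_eq_abs, abs_mul, abs_of_nonneg (hg_pos x).le]
    calc g x * |r x| ≤ g x * B x := mul_le_mul_of_nonneg_left (hrB x) (hg_pos x).le
      _ = g x * B x ^ 1 := by ring
  have Igr2 : Integrable (fun x => g x * r x ^ 2) := by
    refine (IgB 2).mono'
      ((hg_cont.measurable.mul (hr_meas.measurable.pow_const 2)).aestronglyMeasurable) ?_
    filter_upwards with x
    rw [Real.norm_eq_abs, abs_mul, abs_of_nonneg (hg_pos x).le, abs_pow]
    have h1 : |r x| ^ 2 ≤ B x ^ 2 := pow_le_pow_left₀ (abs_nonneg _) (hrB x) 2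
    exact mul_le_mul_of_nonneg_left h1 (hg_pos x).le
  -- Fubini: the mean of the perturbation vanishes
  have hIgr0 : (∫ x, g x * r x) = 0 := by
    have hFcont : Continuous (fun q : ℝ × ℝ => gauss p q.2 * L q.2 * gauss v (q.1 - q.2)) :=
      (((gauss_continuous p).comp continuous_snd).mul (hL_cont.comp continuous_snd)).mul
        ((gauss_continuous v).comp (continuous_fst.sub continuous_snd))
    have hnormint : Integrable (fun x => ∫ t, ‖gauss p t * L t * gauss v (x - t)‖) := by
      have heq : ∀ x : ℝ, (∫ t, ‖gauss p t * L t * gauss v (x - t)‖)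
          = g x * ∫ t, |L t| * gauss w (t - c * x) := by
        intro x
        rw [← integral_const_mul]
        refine integral_congr_ae (ae_of_all _ fun t => ?_)
        show ‖gauss p t * L t * gauss v (x - t)‖ = g x * (|L t| * gauss w (t - c * x))
        rw [Real.norm_eq_abs, abs_mul, abs_mul, abs_of_nonneg (gauss_pos hp t).le,
          abs_of_nonneg (gauss_pos hv _).le,
          show gauss p t * |L t| * gauss v (x - t) = |L t| * (gauss p t * gauss v (x - t)) by ring,
          gauss_mul hp hv x t]
        ring
      have hmeas2 : AEStronglyMeasurable (fun x => ∫ t, ‖gauss p t * L t * gauss v (x - t)‖)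
          volume :=
        (hFcont.norm.stronglyMeasurable.integral_prod_right').aestronglyMeasurable
      refine (IgB 1).mono' hmeas2 ?_
      filter_upwards with x
      rw [Real.norm_eq_abs, heq x]
      have hnn : (0:ℝ) ≤ ∫ t, |L t| * gauss w (t - c * x) :=
        integral_nonneg fun t => mul_nonneg (abs_nonneg _) (gauss_pos hw _).le
      rw [abs_of_nonneg (mul_nonneg (hg_pos x).le hnn), pow_one]
      exact mul_le_mul_of_nonneg_left (hchain x) (hg_pos x).le
    have hint : Integrable (fun q : ℝ × ℝ => gauss p q.2 * L q.2 * gauss v (q.1 - q.2))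
        ((volume : Measure ℝ).prod volume) := by
      rw [integrable_prod_iff hFcont.aestronglyMeasurable]
      exact ⟨ae_of_all _ fun x => Ib x, hnormint⟩
    have hswap := integral_integral_swap
      (f := fun x t => gauss p t * L t * gauss v (x - t)) hint
    have hinner : ∀ t : ℝ, (∫ x, gauss p t * L t * gauss v (x - t)) = gauss p t * L t := by
      intro t
      rw [integral_const_mul, integral_sub_right_eq_self (gauss v) t, integral_gauss hv, mul_one]
    calc ∫ x, g x * r x
        = ∫ x, ∫ t, gauss p t * L t * gauss v (x - t) :=
          integral_congr_ae (ae_of_all _ fun x => (hA_eq x).symm)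
      _ = ∫ t, ∫ x, gauss p t * L t * gauss v (x - t) := hswap
      _ = ∫ t, gauss p t * L t := integral_congr_ae (ae_of_all _ hinner)
      _ = ∫ t, L t * gauss p t := integral_congr_ae (ae_of_all _ fun t => mul_comm _ _)
      _ = 0 := hmean
  -- the perturbed convolution
  have hinner_eq : ∀ (ε : ℝ) (x : ℝ),
      (∫ t, gauss p t * (1 + ε * L t) * gauss v (x - t)) = g x * (1 + ε * r x) := by
    intro ε x
    have hpt : ∀ t : ℝ, gauss p t * (1 + ε * L t) * gauss v (x - t)
        = gauss p t * gauss v (x - t) + ε * (gauss p t * L t * gauss v (x - t)) := fun t => by ring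
    rw [integral_congr_ae (ae_of_all _ hpt), integral_add (Ia x) ((Ib x).const_mul ε),
      integral_const_mul, gauss_conv_s15 hp hv x, hA_eq x]
    ring
  -- rewriting the second moment integral
  have h2nd : (∫ x, ((∫ t, gauss p t * L t * gauss v (x - t)) / g x) ^ 2 * g x)
      = ∫ x, g x * r x ^ 2 := by
    refine integral_congr_ae (ae_of_all _ fun x => ?_)
    show ((∫ t, gauss p t * L t * gauss v (x - t)) / g x) ^ 2 * g x = g x * r x ^ 2
    rw [hA_eq x, mul_div_cancel_left₀ _ (ne_of_gt (hg_pos x))]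
    ring
  set ε₀ : ℝ := (2 * M)⁻¹ with hε₀def
  have hε₀ : 0 < ε₀ := by positivity
  have hεfacts : ∀ ε : ℝ, ε ∈ Set.Ioo (0:ℝ) ε₀ → ε ≤ 1 ∧ ∀ x, -(1/2 : ℝ) ≤ ε * r x := by
    intro ε hε
    obtain ⟨hε0, hεlt⟩ := hε
    have hhalf : ε₀ ≤ 1/2 := by
      rw [hε₀def]
      rw [show (1:ℝ)/2 = (2:ℝ)⁻¹ by norm_num]
      exact inv_anti₀ (by norm_num) (by linarith)
    refine ⟨by linarith, fun x => ?_⟩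
    have h1 : ε * (-M) ≤ ε * r x := mul_le_mul_of_nonneg_left (hr_lower x) hε0.le
    have h2 : ε * M < ε₀ * M := mul_lt_mul_of_pos_right hεlt hM0
    have h3 : ε₀ * M = 1/2 := by
      rw [hε₀def]
      field_simp
    nlinarith
  have hψmeas : ∀ ε : ℝ, AEStronglyMeasurable (fun x => g x * psiFn (ε * r x)) volume := by
    intro ε
    have h1 : Measurable fun x => 1 + ε * r x :=
      measurable_const.add (measurable_const.mul hr_meas.measurable)
    have h2 : Measurable fun x => psiFn (ε * r x) := by
      have : (fun x => psiFn (ε * r x)) = fun x =>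
          (1 + ε * r x) * Real.log (1 + ε * r x) - ε * r x - (ε * r x) ^ 2 / 2 := rfl
      rw [this]
      exact ((h1.mul (Real.measurable_log.comp h1)).sub
        (measurable_const.mul hr_meas.measurable)).sub
        (((measurable_const.mul hr_meas.measurable).pow_const 2).div_const 2)
    exact (hg_cont.measurable.mul h2).aestronglyMeasurable
  -- key identity on (0, ε₀)
  have hmain : ∀ ε ∈ Set.Ioo (0:ℝ) ε₀,
      ((∫ x, (∫ t, gauss p t * (1 + ε * L t) * gauss v (x - t)) *
            Real.log ((∫ t, gauss p t * (1 + ε * L t) * gauss v (x - t)) / g x))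
        - ε ^ 2 / 2 * ∫ x, ((∫ t, gauss p t * L t * gauss v (x - t)) / g x) ^ 2 * g x)
      = ∫ x, g x * psiFn (ε * r x) := by
    intro ε hε
    obtain ⟨hε1, hu_low⟩ := hεfacts ε hε
    obtain ⟨hε0, -⟩ := hε
    have hψb : ∀ x, |psiFn (ε * r x)| ≤ 5 * B x ^ 3 := by
      intro x
      refine (abs_psiFn_le (hu_low x)).trans ?_
      have h1 : |ε * r x| ≤ B x := by
        rw [abs_mul, abs_of_pos hε0]
        calc ε * |r x| ≤ 1 * |r x| := mul_le_mul_of_nonneg_right hε1 (abs_nonneg _)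
          _ = |r x| := one_mul _
          _ ≤ B x := hrB x
      have h2 : |ε * r x| ^ 3 ≤ B x ^ 3 := pow_le_pow_left₀ (abs_nonneg _) h1 3
      linarith
    have Iψ : Integrable (fun x => g x * psiFn (ε * r x)) := by
      refine ((IgB 3).const_mul 5).mono' (hψmeas ε) ?_
      filter_upwards with x
      rw [Real.norm_eq_abs, abs_mul, abs_of_nonneg (hg_pos x).le]
      calc g x * |psiFn (ε * r x)| ≤ g x * (5 * B x ^ 3) :=
            mul_le_mul_of_nonneg_left (hψb x) (hg_pos x).le
        _ = 5 * (g x * B x ^ 3) := by ring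
    have hfirst : (∫ x, (∫ t, gauss p t * (1 + ε * L t) * gauss v (x - t)) *
        Real.log ((∫ t, gauss p t * (1 + ε * L t) * gauss v (x - t)) / g x))
        = (∫ x, g x * psiFn (ε * r x)) + ε * (∫ x, g x * r x)
          + ε ^ 2 / 2 * ∫ x, g x * r x ^ 2 := by
      have h1 : ∀ x, (∫ t, gauss p t * (1 + ε * L t) * gauss v (x - t)) *
          Real.log ((∫ t, gauss p t * (1 + ε * L t) * gauss v (x - t)) / g x)
          = g x * psiFn (ε * r x) + ε * (g x * r x) + ε ^ 2 / 2 * (g x * r x ^ 2) := by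
        intro x
        rw [hinner_eq ε x, mul_div_cancel_left₀ _ (ne_of_gt (hg_pos x))]
        show g x * (1 + ε * r x) * Real.log (1 + ε * r x)
          = g x * ((1 + ε * r x) * Real.log (1 + ε * r x) - ε * r x - (ε * r x) ^ 2 / 2)
            + ε * (g x * r x) + ε ^ 2 / 2 * (g x * r x ^ 2)
        ring
      have I12 : Integrable (fun x => g x * psiFn (ε * r x) + ε * (g x * r x)) :=
        Iψ.add (Igr.const_mul ε)
      have I3 : Integrable (fun x => ε ^ 2 / 2 * (g x * r x ^ 2)) := Igr2.const_mul _
      rw [integral_congr_ae (ae_of_all _ h1), integral_add I12 I3,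
        integral_add Iψ (Igr.const_mul ε), integral_const_mul, integral_const_mul]
    rw [hfirst, h2nd, hIgr0]
    ring
  -- pass to the limit by dominated convergence
  have hIoo : Set.Ioo (0:ℝ) ε₀ ∈ nhdsWithin (0:ℝ) (Set.Ioi 0) :=
    Ioo_mem_nhdsGT_of_mem ⟨le_refl 0, hε₀⟩
  have hbound_pt : ∀ ε ∈ Set.Ioo (0:ℝ) ε₀, ∀ x : ℝ,
      ‖g x * psiFn (ε * r x) / ε ^ 2‖ ≤ 5 * ε * (g x * |r x| ^ 3) := by
    intro ε hε x
    obtain ⟨hε1, hu_low⟩ := hεfacts ε hε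
    obtain ⟨hε0, -⟩ := hε
    have h1 : |psiFn (ε * r x)| ≤ 5 * (ε ^ 3 * |r x| ^ 3) := by
      have h := abs_psiFn_le (hu_low x)
      rw [abs_mul, abs_of_pos hε0, mul_pow] at h
      linarith
    have hε2 : (0:ℝ) < ε ^ 2 := pow_pos hε0 2
    rw [Real.norm_eq_abs, abs_div, abs_mul, abs_of_nonneg (hg_pos x).le, abs_of_pos hε2,
      div_le_iff₀ hε2]
    calc g x * |psiFn (ε * r x)| ≤ g x * (5 * (ε ^ 3 * |r x| ^ 3)) :=
          mul_le_mul_of_nonneg_left h1 (hg_pos x).le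
      _ = 5 * ε * (g x * |r x| ^ 3) * ε ^ 2 := by ring
  have hDCT : Filter.Tendsto (fun ε : ℝ => ∫ x, g x * psiFn (ε * r x) / ε ^ 2)
      (nhdsWithin 0 (Set.Ioi 0)) (nhds 0) := by
    rw [show nhds (0:ℝ) = nhds (∫ _ : ℝ, (0:ℝ)) by simp]
    refine tendsto_integral_filter_of_dominated_convergence
      (fun x => 5 * (g x * B x ^ 3)) ?_ ?_ ((IgB 3).const_mul 5) ?_
    · refine Filter.Eventually.of_forall fun ε => ((hψmeas ε).const_mul (ε ^ 2)⁻¹).congr ?_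
      exact ae_of_all _ fun x => (div_eq_inv_mul _ _).symm
    · filter_upwards [hIoo] with ε hε
      refine ae_of_all _ fun x => ?_
      refine (hbound_pt ε hε x).trans ?_
      obtain ⟨hε1, -⟩ := hεfacts ε hε
      obtain ⟨hε0, -⟩ := hε
      have hr3 : |r x| ^ 3 ≤ B x ^ 3 := pow_le_pow_left₀ (abs_nonneg _) (hrB x) 3
      have hgx := hg_pos x
      have hA0 : 0 ≤ g x * |r x| ^ 3 := mul_nonneg hgx.le (pow_nonneg (abs_nonneg _) 3)
      have h2 : g x * |r x| ^ 3 ≤ g x * B x ^ 3 := mul_le_mul_of_nonneg_left hr3 hgx.le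
      nlinarith [mul_nonneg (sub_nonneg.2 hε1) hA0, h2, hA0]
    · refine ae_of_all _ fun x => ?_
      have hsq : Filter.Tendsto (fun ε : ℝ => 5 * ε * (g x * |r x| ^ 3))
          (nhdsWithin 0 (Set.Ioi 0)) (nhds 0) := by
        have hc : Continuous fun ε : ℝ => 5 * ε * (g x * |r x| ^ 3) := by continuity
        have := hc.tendsto 0
        simp only [mul_zero, zero_mul] at this
        exact this.mono_left nhdsWithin_le_nhds
      refine squeeze_zero_norm' ?_ hsq
      filter_upwards [hIoo] with ε hε
      exact hbound_pt ε hε x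
  refine Filter.Tendsto.congr' ?_ hDCT
  filter_upwards [hIoo] with ε hε
  rw [hmain ε hε, integral_div]
end

section
/- For all a, p > 0 with p a^3 + a − 1/2 > 0 and a < 1, if additionally F_3(a,p) = (a²/(pa²+1))³ − (a³−1)²/(pa²+p+1)³ > 0, then a > T₁(p) where T₁(p) is the unique positive root of p a³ + a − 1/2; i.e. the unique positive root of F_3(·,p) is strictly greater than T₁(p) for every p > 0. -/
/-- `F₃(a,p) = (a²/(pa²+1))³ − (a³−1)²/(pa²+p+1)³`. -/
noncomputable def F3 (a p : ℝ) : ℝ :=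
  (a ^ 2 / (p * a ^ 2 + 1)) ^ 3 - (a ^ 3 - 1) ^ 2 / (p * a ^ 2 + p + 1) ^ 3

lemma F3_neg (a p : ℝ) (ha : 0 < a) (hp : 0 < p)
    (h : p * a ^ 3 + a - 1 / 2 ≤ 0) : F3 a p < 0 := by
  have ha1 : a < 1 := by nlinarith [mul_pos hp (pow_pos ha 3)]
  have hv : (0:ℝ) < p * a ^ 2 + 1 := by positivity
  have hw : (0:ℝ) < p * a ^ 2 + p + 1 := by positivity
  have hu : 0 < a ^ 2 * (p * a ^ 2 + p + 1) := by positivity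
  have huv : a ^ 2 * (p * a ^ 2 + p + 1) ≤ (1 - a) ^ 2 * (p * a ^ 2 + 1) := by
    have key : (1 - a) ^ 2 * (p * a ^ 2 + 1) - a ^ 2 * (p * a ^ 2 + p + 1)
        = 2 * (1 / 2 - a - p * a ^ 3) := by ring
    linarith
  have h1 : (a ^ 2 * (p * a ^ 2 + p + 1)) ^ 3 ≤ ((1 - a) ^ 2 * (p * a ^ 2 + 1)) ^ 3 :=
    pow_le_pow_left₀ hu.le huv 3
  have key : (1 - a) ^ 6 < (1 - a ^ 3) ^ 2 := by
    have hfact : (1 - a ^ 3) ^ 2 - (1 - a) ^ 6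
        = (1 - a) ^ 2 * (3 * a) * (2 - a + 2 * a ^ 2) := by ring
    nlinarith [sq_nonneg (1 - a), mul_pos (mul_pos (pow_pos (by linarith : (0:ℝ) < 1 - a) 2)
      (by linarith : (0:ℝ) < 3 * a)) (by nlinarith [sq_nonneg (1 - a)] : (0:ℝ) < 2 - a + 2 * a ^ 2)]
  have h2 : ((1 - a) ^ 2 * (p * a ^ 2 + 1)) ^ 3 < (a ^ 3 - 1) ^ 2 * (p * a ^ 2 + 1) ^ 3 := by
    have hv3 : (0:ℝ) < (p * a ^ 2 + 1) ^ 3 := by positivity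
    calc ((1 - a) ^ 2 * (p * a ^ 2 + 1)) ^ 3 = (1 - a) ^ 6 * (p * a ^ 2 + 1) ^ 3 := by ring
    _ < (1 - a ^ 3) ^ 2 * (p * a ^ 2 + 1) ^ 3 := (mul_lt_mul_iff_of_pos_right hv3).mpr key
    _ = (a ^ 3 - 1) ^ 2 * (p * a ^ 2 + 1) ^ 3 := by ring
  have hmain : (a ^ 2) ^ 3 * (p * a ^ 2 + p + 1) ^ 3 < (a ^ 3 - 1) ^ 2 * (p * a ^ 2 + 1) ^ 3 := by
    calc (a ^ 2) ^ 3 * (p * a ^ 2 + p + 1) ^ 3 = (a ^ 2 * (p * a ^ 2 + p + 1)) ^ 3 := by ring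
    _ ≤ ((1 - a) ^ 2 * (p * a ^ 2 + 1)) ^ 3 := h1
    _ < (a ^ 3 - 1) ^ 2 * (p * a ^ 2 + 1) ^ 3 := h2
  have hfin : (a ^ 2 / (p * a ^ 2 + 1)) ^ 3 < (a ^ 3 - 1) ^ 2 / (p * a ^ 2 + p + 1) ^ 3 := by
    rw [div_pow, div_lt_div_iff₀ (by positivity) (by positivity)]
    exact hmain
  unfold F3
  linarith

/-- Ordering of thresholds `T₁(p) < T₃(p)`: if `T₁` is the positive root of
`p a³ + a − 1/2` then any `a ∈ (0,1)` with `p a³ + a − 1/2 > 0` and `F₃(a,p) > 0`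
satisfies `a > T₁`, and the unique positive root of `F₃(·,p)` is strictly
greater than `T₁(p)`. -/
theorem T1_lt_T3 (p : ℝ) (hp : 0 < p) (T₁ : ℝ) (hT₁pos : 0 < T₁)
    (hT₁ : p * T₁ ^ 3 + T₁ - 1 / 2 = 0) :
    (∀ a : ℝ, 0 < a → a < 1 → 0 < p * a ^ 3 + a - 1 / 2 → 0 < F3 a p → T₁ < a) ∧
    (∀ T₃ : ℝ, 0 < T₃ → F3 T₃ p = 0 → T₁ < T₃) := by
  constructor
  · intro a ha _ hg _
    by_contra hle
    push_neg at hle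
    have h3 : a ^ 3 ≤ T₁ ^ 3 := pow_le_pow_left₀ ha.le hle 3
    nlinarith [mul_le_mul_of_nonneg_left h3 hp.le]
  · intro T₃ hT₃ hF
    by_contra hle
    push_neg at hle
    have h3 : T₃ ^ 3 ≤ T₁ ^ 3 := pow_le_pow_left₀ hT₃.le hle 3
    have hg : p * T₃ ^ 3 + T₃ - 1 / 2 ≤ 0 := by
      nlinarith [mul_le_mul_of_nonneg_left h3 hp.le]
    have := F3_neg T₃ p hT₃ hp hg
    linarith
end
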